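/- arXiv:1104.5338 — 3 statements merged into one kernel-verified Lean document; each statement's English description precedes it below -/
import Mathlib

section
/- (Upper bound for α⁺.) For every n ≥ 2, 0 < λ ≤ Λ, μ ≥ 0 and σ₀ ∈ (0,1] there exists a constant C > 0, depending only on n, λ, Λ, μ and σ₀, with the following property: if ξ ∈ S^{n−1} and σ ≤ 1 − σ₀ are such that ω ⊇ { x ∈ S^{n−1} : x·ξ > σ }, then for every operator F satisfying the structural conditions with these λ, Λ, μ one has α⁺(F,ω) ≤ C. -/
open Set Filter Topology Metric

noncomputable section

/-- Euclidean space `ℝⁿ`. -/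
abbrev En (n : ℕ) := EuclideanSpace ℝ (Fin n)

/-- Real symmetric-matrix space `Sₙ` is modelled inside all `n × n` matrices. -/
abbrev Mat (n : ℕ) := Matrix (Fin n) (Fin n) ℝ

/-- The type of fully nonlinear operators `F = F(M, p, x)`. -/
abbrev OpType (n : ℕ) := Mat n → En n → En n → ℝ

/-- The gradient vector `Dφ(x)` of a function `φ`. -/
def grad (n : ℕ) (φ : En n → ℝ) (x : En n) : En n :=
  WithLp.toLp 2 (fun i => fderiv ℝ φ x (EuclideanSpace.single i 1))

/-- The Hessian matrix `D²φ(x)` of a function `φ`. -/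
def hess (n : ℕ) (φ : En n → ℝ) (x : En n) : Mat n :=
  Matrix.of fun i j =>
    fderiv ℝ (fun y => fderiv ℝ φ y (EuclideanSpace.single j 1)) x (EuclideanSpace.single i 1)

/-- `u` is a viscosity subsolution of `G(D²u, Du, u, x) ≤ 0` in the open set `U`. -/
def ViscSubsol (n : ℕ) (G : Mat n → En n → ℝ → En n → ℝ) (U : Set (En n)) (u : En n → ℝ) :
    Prop :=
  ∀ φ : En n → ℝ, ContDiff ℝ 2 φ → ∀ x₀ ∈ U,
    IsLocalMaxOn (fun x => u x - φ x) U x₀ → G (hess n φ x₀) (grad n φ x₀) (u x₀) x₀ ≤ 0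

/-- `u` is a viscosity supersolution of `G(D²u, Du, u, x) ≥ 0` in the open set `U`. -/
def ViscSupersol (n : ℕ) (G : Mat n → En n → ℝ → En n → ℝ) (U : Set (En n)) (u : En n → ℝ) :
    Prop :=
  ∀ φ : En n → ℝ, ContDiff ℝ 2 φ → ∀ x₀ ∈ U,
    IsLocalMinOn (fun x => u x - φ x) U x₀ → 0 ≤ G (hess n φ x₀) (grad n φ x₀) (u x₀) x₀

/-- `u` is a (continuous) viscosity solution of `G(D²u, Du, u, x) = 0` in `U`. -/
def ViscSol (n : ℕ) (G : Mat n → En n → ℝ → En n → ℝ) (U : Set (En n)) (u : En n → ℝ) :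
    Prop :=
  ContinuousOn u U ∧ ViscSubsol n G U u ∧ ViscSupersol n G U u

/-- The set of symmetric matrices `A` with `λ I ≤ A ≤ Λ I` in the Loewner order. -/
def PucciSet (n : ℕ) (lam Lam : ℝ) : Set (Mat n) :=
  {A | (A - lam • (1 : Mat n)).PosSemidef ∧ (Lam • (1 : Mat n) - A).PosSemidef}

/-- The Pucci maximal operator `P⁺`. -/
def PucciPlus (n : ℕ) (lam Lam : ℝ) (M : Mat n) : ℝ :=
  sSup ((fun A => -Matrix.trace (A * M)) '' PucciSet n lam Lam)

/-- The Pucci minimal operator `P⁻`. -/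
def PucciMinus (n : ℕ) (lam Lam : ℝ) (M : Mat n) : ℝ :=
  sInf ((fun A => -Matrix.trace (A * M)) '' PucciSet n lam Lam)

/-- A (Frobenius) norm on matrices. -/
def matNorm (n : ℕ) (M : Mat n) : ℝ := Real.sqrt (∑ i, ∑ j, (M i j) ^ 2)

/-- The open cone `C_ω` over a subset `ω` of the unit sphere. -/
def cone (n : ℕ) (ω : Set (En n)) : Set (En n) := {x | x ≠ 0 ∧ ‖x‖⁻¹ • x ∈ ω}

/-- The annular section `E(ω, r, R) = C_ω ∩ {r < |x| < R}`. -/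
def Econe (n : ℕ) (ω : Set (En n)) (r R : ℝ) : Set (En n) :=
  cone n ω ∩ {x | r < ‖x‖ ∧ ‖x‖ < R}

/-- `H_α(ω)`: continuous functions on `C_ω` with `u(x) = t^α u(t x)` for all `t > 0`. -/
def Hhom (n : ℕ) (ω : Set (En n)) (α : ℝ) (u : En n → ℝ) : Prop :=
  ContinuousOn u (cone n ω) ∧ ∀ x ∈ cone n ω, ∀ t : ℝ, 0 < t → u x = t ^ α * u (t • x)

/-- `S` is a `C²` hypersurface: locally a regular zero set of a `C²` function. -/
def IsC2Hypersurface (n : ℕ) (S : Set (En n)) : Prop :=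
  ∀ x ∈ S, ∃ (V : Set (En n)) (f : En n → ℝ), IsOpen V ∧ x ∈ V ∧ ContDiffOn ℝ 2 f V ∧
    (∀ y ∈ V, fderiv ℝ f y ≠ 0) ∧ S ∩ V = {y ∈ V | f y = 0}

/-- `ω` is a proper, `C²`-smooth, open connected subdomain of the unit sphere. -/
structure GoodCone (n : ℕ) (ω : Set (En n)) : Prop where
  subset_sphere : ω ⊆ sphere (0 : En n) 1
  nonempty : ω.Nonempty
  ne_sphere : ω ≠ sphere (0 : En n) 1
  rel_open : ∃ V : Set (En n), IsOpen V ∧ ω = V ∩ sphere (0 : En n) 1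
  connected : IsConnected ω
  c2_boundary : IsC2Hypersurface n (frontier (cone n ω) \ {0})

/-- The structural conditions (ellipticity, homogeneity, Hölder regularity in `x`,
scaling invariance) on the operator `F`. -/
structure StructF (n : ℕ) (lam Lam mu K θ : ℝ) (F : OpType n) : Prop where
  lam_pos : 0 < lam
  lam_le : lam ≤ Lam
  mu_nonneg : 0 ≤ mu
  K_pos : 0 < K
  theta_mem : θ ∈ Ioc (1 / 2 : ℝ) 1
  cont : ContinuousOn (fun q : Mat n × En n × En n => F q.1 q.2.1 q.2.2) {q | q.2.2 ≠ 0}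
  ellip_lower : ∀ (M N : Mat n) (p q x : En n), x ≠ 0 →
    PucciMinus n lam Lam (M - N) - mu * ‖x‖⁻¹ * ‖p - q‖ ≤ F M p x - F N q x
  ellip_upper : ∀ (M N : Mat n) (p q x : En n), x ≠ 0 →
    F M p x - F N q x ≤ PucciPlus n lam Lam (M - N) + mu * ‖x‖⁻¹ * ‖p - q‖
  homog : ∀ t : ℝ, 0 ≤ t → ∀ (M : Mat n) (p x : En n), x ≠ 0 → F (t • M) (t • p) x = t * F M p x
  holder : ∀ (M : Mat n) (x y : En n), ‖x‖ = 1 → ‖y‖ = 1 →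
    |F M 0 x - F M 0 y| ≤ K * (1 + matNorm n M) * ‖x - y‖ ^ θ
  scaling : ∀ r : ℝ, 0 < r → ∀ (M : Mat n) (p x : En n), x ≠ 0 →
    F ((r ^ 2) • M) (r • p) x = r ^ 2 * F M p (r • x)

/-- The admissible set defining `α⁺(F, ω)`. -/
def alphaPlusSet (n : ℕ) (F : OpType n) (ω : Set (En n)) : Set ℝ :=
  {α | 0 < α ∧ ∃ u : En n → ℝ, Hhom n ω α u ∧ (∀ x ∈ cone n ω, 0 < u x) ∧
    ViscSupersol n (fun M p _ x => F M p x) (cone n ω) u}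

/-- The admissible set defining `α⁻(F, ω)`. -/
def alphaMinusSet (n : ℕ) (F : OpType n) (ω : Set (En n)) : Set ℝ :=
  {α | α < 0 ∧ ∃ u : En n → ℝ, Hhom n ω α u ∧ (∀ x ∈ cone n ω, 0 < u x) ∧
    ViscSupersol n (fun M p _ x => F M p x) (cone n ω) u}

/-- The scaling exponent `α⁺(F, ω)`. -/
def alphaPlus (n : ℕ) (F : OpType n) (ω : Set (En n)) : ℝ := sSup (alphaPlusSet n F ω)

/-- The scaling exponent `α⁻(F, ω)`. -/
def alphaMinus (n : ℕ) (F : OpType n) (ω : Set (En n)) : ℝ := sInf (alphaMinusSet n F ω)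

/-- `Ψ` is the (α⁺)-homogeneous positive singular solution `Ψ⁺` in the cone `C_ω`. -/
def IsPsiPlus (n : ℕ) (F : OpType n) (ω : Set (En n)) (Ψ : En n → ℝ) : Prop :=
  Hhom n ω (alphaPlus n F ω) Ψ ∧
  ContinuousOn Ψ (closure (cone n ω) \ {0}) ∧
  (∀ x ∈ cone n ω, 0 < Ψ x) ∧
  (∀ x ∈ frontier (cone n ω) \ {0}, Ψ x = 0) ∧
  ViscSol n (fun M p _ x => F M p x) (cone n ω) Ψ

/-- `Ψ` is the (α⁻)-homogeneous positive singular solution `Ψ⁻` in the cone `C_ω`. -/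
def IsPsiMinus (n : ℕ) (F : OpType n) (ω : Set (En n)) (Ψ : En n → ℝ) : Prop :=
  Hhom n ω (alphaMinus n F ω) Ψ ∧
  ContinuousOn Ψ (closure (cone n ω)) ∧
  (∀ x ∈ cone n ω, 0 < Ψ x) ∧
  (∀ x ∈ frontier (cone n ω) \ {0}, Ψ x = 0) ∧
  ViscSol n (fun M p _ x => F M p x) (cone n ω) Ψ

/-- `Ω` has a conical corner at `0 ∈ ∂Ω`, straightened by the `C²` diffeomorphism `ζ` of
the unit ball, with `ζ(Ω ∩ B₁) = C_ω ∩ B₁`, `ζ(0) = 0` and `Dζ(0) = I`. -/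
structure ConicalCorner (n : ℕ) (ω Ω : Set (En n)) (ζ : En n → En n) : Prop where
  zero_bdry : (0 : En n) ∈ frontier Ω
  contDiff : ContDiffOn ℝ 2 ζ (ball (0 : En n) 1)
  mapsTo : MapsTo ζ (ball (0 : En n) 1) (ball (0 : En n) 1)
  exists_inv : ∃ ξ : En n → En n, ContDiffOn ℝ 2 ξ (ball (0 : En n) 1) ∧
    MapsTo ξ (ball (0 : En n) 1) (ball (0 : En n) 1) ∧
    (∀ x ∈ ball (0 : En n) 1, ξ (ζ x) = x) ∧ ∀ y ∈ ball (0 : En n) 1, ζ (ξ y) = y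
  image_eq : ζ '' (Ω ∩ ball (0 : En n) 1) = cone n ω ∩ ball (0 : En n) 1
  map_zero : ζ 0 = 0
  deriv_zero : fderiv ℝ ζ 0 = ContinuousLinearMap.id ℝ (En n)

/-- The inversion `x ↦ x / |x|²`. -/
def sInv (n : ℕ) (x : En n) : En n := (‖x‖ ^ 2)⁻¹ • x


namespace S13

variable {n : ℕ}

/-! ### Calculus of the barrier function -/

/-- sum of squared coordinates of `x - z`. -/
def Q (z : En n) (x : En n) : ℝ := ∑ i, (x i - z i) ^ 2

def DQ (z : En n) (x : En n) : En n →L[ℝ] ℝ :=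
  ∑ i, (2 * (x i - z i)) • (EuclideanSpace.proj i)

lemma hasFDerivAt_Q (z x : En n) : HasFDerivAt (Q z) (DQ z x) x := by
  have h : ∀ i : Fin n, HasFDerivAt (fun y : En n => (y i - z i) ^ 2)
      ((2 * (x i - z i)) • (EuclideanSpace.proj (𝕜 := ℝ) i)) x := by
    intro i
    have h1 : HasFDerivAt (fun y : En n => y i - z i)
        (EuclideanSpace.proj (𝕜 := ℝ) i) x :=
      (EuclideanSpace.proj (𝕜 := ℝ) i).hasFDerivAt.sub_const (z i)
    have h2 := h1.fun_mul h1
    have : (fun y : En n => (y i - z i) * (y i - z i)) = fun y : En n => (y i - z i) ^ 2 := by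
      funext y; ring
    rw [this] at h2
    rw [two_mul, add_smul]
    exact h2
  exact HasFDerivAt.fun_sum (fun i _ => h i)

/-- the barrier `b * (exp(-k |x-z|²) - e)`. -/
def barr (z : En n) (k e b : ℝ) (x : En n) : ℝ := b * (Real.exp ((-k) * Q z x) - e)

def Ebar (z : En n) (k : ℝ) (x : En n) : ℝ := Real.exp ((-k) * Q z x)

lemma Ebar_pos (z : En n) (k : ℝ) (x : En n) : 0 < Ebar z k x := Real.exp_pos _

lemma hasFDerivAt_barr (z : En n) (k e b : ℝ) (x : En n) :
    HasFDerivAt (barr z k e b) (b • ((Ebar z k x) • ((-k) • DQ z x))) x := by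
  have h3 : HasFDerivAt (fun y => (-k) * Q z y) ((-k) • DQ z x) x :=
    (hasFDerivAt_Q z x).const_mul (-k)
  exact (h3.exp.sub_const e).const_mul b

lemma DQ_apply_single (z x : En n) (i : Fin n) :
    DQ z x (EuclideanSpace.single i 1) = 2 * (x i - z i) := by
  simp only [DQ, ContinuousLinearMap.sum_apply, ContinuousLinearMap.smul_apply]
  have : ∀ j : Fin n, EuclideanSpace.proj (𝕜 := ℝ) j (EuclideanSpace.single i (1:ℝ))
      = if j = i then 1 else 0 := by
    intro j
    have h : EuclideanSpace.proj (𝕜 := ℝ) j (EuclideanSpace.single i (1:ℝ))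
        = EuclideanSpace.single i (1:ℝ) j := rfl
    rw [h, EuclideanSpace.single_apply]
  simp only [this, smul_eq_mul, mul_ite, mul_one, mul_zero]
  rw [Finset.sum_ite_eq' Finset.univ i (fun j => 2 * (x j - z j))]
  simp

lemma fderiv_barr_apply (z : En n) (k e b : ℝ) (x : En n) (j : Fin n) :
    fderiv ℝ (barr z k e b) x (EuclideanSpace.single j 1)
      = (2 * b * (-k) * Ebar z k x) * (x j - z j) := by
  rw [(hasFDerivAt_barr z k e b x).fderiv]
  simp only [ContinuousLinearMap.smul_apply, smul_eq_mul, DQ_apply_single]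
  ring

lemma grad_barr (z : En n) (k e b : ℝ) (x : En n) :
    grad n (barr z k e b) x = (2 * b * (-k) * Ebar z k x) • (x - z) := by
  ext i
  have h : ((2 * b * (-k) * Ebar z k x) • (x - z)) i
      = (2 * b * (-k) * Ebar z k x) * (x i - z i) := rfl
  rw [h]
  exact fderiv_barr_apply z k e b x i

lemma hess_barr (z : En n) (k e b : ℝ) (x : En n) :
    hess n (barr z k e b) x = Matrix.of fun i j =>
      (4 * b * k ^ 2 * Ebar z k x) * ((x i - z i) * (x j - z j))
        + (if i = j then (-(2 * b * k * Ebar z k x)) else 0) := by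
  have key : ∀ i j : Fin n,
      fderiv ℝ (fun y => fderiv ℝ (barr z k e b) y (EuclideanSpace.single j 1)) x
        (EuclideanSpace.single i 1)
      = (4 * b * k ^ 2 * Ebar z k x) * ((x i - z i) * (x j - z j))
        + (if i = j then (-(2 * b * k * Ebar z k x)) else 0) := by
    intro i j
    have hfun : (fun y => fderiv ℝ (barr z k e b) y (EuclideanSpace.single j 1))
        = fun y => (2 * b * (-k) * Ebar z k y) * (y j - z j) := by
      funext y; exact fderiv_barr_apply z k e b y j
    rw [hfun]
    have hc : HasFDerivAt (fun y : En n => 2 * b * (-k) * Ebar z k y)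
        ((2 * b * (-k)) • ((Ebar z k x) • ((-k) • DQ z x))) x := by
      have h3 : HasFDerivAt (fun y => (-k) * Q z y) ((-k) • DQ z x) x :=
        (hasFDerivAt_Q z x).const_mul (-k)
      exact h3.exp.const_mul (2 * b * (-k))
    have hd : HasFDerivAt (fun y : En n => y j - z j)
        (EuclideanSpace.proj (𝕜 := ℝ) j) x :=
      (EuclideanSpace.proj (𝕜 := ℝ) j).hasFDerivAt.sub_const (z j)
    have hprod := hc.fun_mul hd
    rw [hprod.fderiv]
    have hproj : EuclideanSpace.proj (𝕜 := ℝ) j (EuclideanSpace.single i (1:ℝ))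
        = if i = j then 1 else 0 := by
      have h : EuclideanSpace.proj (𝕜 := ℝ) j (EuclideanSpace.single i (1:ℝ))
          = EuclideanSpace.single i (1:ℝ) j := rfl
      rw [h, EuclideanSpace.single_apply]
      simp [eq_comm]
    simp only [ContinuousLinearMap.add_apply, ContinuousLinearMap.smul_apply, smul_eq_mul,
      hproj, DQ_apply_single]
    by_cases hij : i = j <;> simp [hij] <;> ring
  funext i j
  exact key i j

lemma contDiff_barr (z : En n) (k e b : ℝ) : ContDiff ℝ 2 (barr z k e b) := by
  have hQ : ContDiff ℝ 2 (Q z) := by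
    apply ContDiff.sum
    intro i _
    exact ((EuclideanSpace.proj (𝕜 := ℝ) i).contDiff.sub contDiff_const).pow 2
  exact ((Real.contDiff_exp.comp (hQ.const_smul (-k))).sub contDiff_const).const_smul b

/-! ### Pucci estimates -/

lemma smul_one_psd {c : ℝ} (hc : 0 ≤ c) : (c • (1 : Mat n)).PosSemidef := by
  exact Matrix.PosSemidef.one.smul hc

lemma lam_one_mem (lam Lam : ℝ) (h : lam ≤ Lam) : lam • (1 : Mat n) ∈ PucciSet n lam Lam := by
  constructor
  · simpa using Matrix.PosSemidef.zero
  · rw [← sub_smul]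
    exact smul_one_psd (by linarith)

lemma quad_ge {lam Lam : ℝ} {A : Mat n} (hA : A ∈ PucciSet n lam Lam) (v : Fin n → ℝ) :
    lam * dotProduct v v ≤ dotProduct v (A.mulVec v) := by
  have h1 := hA.1.dotProduct_mulVec_nonneg v
  rw [star_trivial, Matrix.sub_mulVec, dotProduct_sub, Matrix.smul_mulVec,
    Matrix.one_mulVec, dotProduct_smul, smul_eq_mul] at h1
  linarith

lemma diag_le {lam Lam : ℝ} {A : Mat n} (hA : A ∈ PucciSet n lam Lam) (i : Fin n) :
    A i i ≤ Lam := by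
  have h2 := hA.2.dotProduct_mulVec_nonneg (Pi.single i 1)
  rw [star_trivial, Matrix.mulVec_single_one, single_dotProduct] at h2
  simp only [Matrix.col_apply, Matrix.sub_apply, Matrix.smul_apply, Matrix.one_apply_eq, smul_eq_mul, mul_one,
    one_mul] at h2
  linarith

lemma trace_le {lam Lam : ℝ} {A : Mat n} (hA : A ∈ PucciSet n lam Lam) :
    Matrix.trace A ≤ n * Lam := by
  have h : Matrix.trace A = ∑ i, A i i := rfl
  rw [h]
  calc ∑ i, A i i ≤ ∑ _i : Fin n, Lam := Finset.sum_le_sum fun i _ => diag_le hA i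
  _ = n * Lam := by simp [mul_comm]

/-- trace of `A * (β vvᵀ + γ I)`. -/
lemma trace_formula (A : Mat n) (v : Fin n → ℝ) (β γ : ℝ) :
    Matrix.trace (A * (Matrix.of fun i j => β * (v i * v j) + (if i = j then γ else 0)))
      = β * dotProduct v (A.mulVec v) + γ * Matrix.trace A := by
  have hrow : ∀ i : Fin n, ∑ j, A i j * (β * (v j * v i) + (if j = i then γ else 0))
      = β * (v i * (A.mulVec v i)) + A i i * γ := by
    intro i
    simp only [mul_add, Finset.sum_add_distrib, mul_ite, mul_zero]
    rw [Finset.sum_ite_eq' Finset.univ i (fun j => A i j * γ)]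
    simp only [Finset.mem_univ, if_true]
    congr 1
    have h : A.mulVec v i = ∑ j, A i j * v j := rfl
    rw [h, Finset.mul_sum, Finset.mul_sum]
    apply Finset.sum_congr rfl
    intros; ring
  have h0 : Matrix.trace (A * (Matrix.of fun i j => β * (v i * v j) + (if i = j then γ else 0)))
      = ∑ i, ∑ j, A i j * (β * (v j * v i) + (if j = i then γ else 0)) := by
    simp [Matrix.trace, Matrix.diag, Matrix.mul_apply, Matrix.of_apply]
  rw [h0]
  rw [Finset.sum_congr rfl (fun i _ => hrow i), Finset.sum_add_distrib]
  have hdp : dotProduct v (A.mulVec v) = ∑ i, v i * A.mulVec v i := rfl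
  rw [hdp]
  have htr : Matrix.trace A = ∑ i, A i i := rfl
  rw [htr, Finset.mul_sum, Finset.mul_sum]
  apply congrArg₂ HAdd.hAdd <;> · apply Finset.sum_congr rfl; intros; ring

lemma neg_trace_le {lam Lam : ℝ} {A : Mat n} (hA : A ∈ PucciSet n lam Lam)
    (v : Fin n → ℝ) {β γ : ℝ} (hβ : 0 ≤ β) (hγ : γ ≤ 0) :
    -Matrix.trace (A * (Matrix.of fun i j => β * (v i * v j) + (if i = j then γ else 0)))
      ≤ -(β * (lam * dotProduct v v)) + (-γ) * (n * Lam) := by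
  rw [trace_formula]
  have h1 := quad_ge hA v
  have h2 := trace_le hA
  have hq0 : 0 ≤ dotProduct v v := by
    apply Finset.sum_nonneg; intro i _; exact mul_self_nonneg (v i)
  nlinarith [mul_le_mul_of_nonneg_left h1 hβ, mul_le_mul_of_nonneg_left h2 (neg_nonneg.2 hγ)]

lemma pucciPlus_le {lam Lam : ℝ} (hLam : lam ≤ Lam) (M : Mat n) (B : ℝ)
    (h : ∀ A ∈ PucciSet n lam Lam, -Matrix.trace (A * M) ≤ B) :
    PucciPlus n lam Lam M ≤ B := by
  apply csSup_le
  · exact ⟨_, ⟨lam • (1 : Mat n), lam_one_mem lam Lam hLam, rfl⟩⟩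
  · rintro y ⟨A, hA, rfl⟩
    exact h A hA

/-! ### norms -/

lemma sum_mul_self_eq (w : En n) : (∑ i, w i * w i) = ‖w‖ ^ 2 := by
  rw [EuclideanSpace.norm_eq, Real.sq_sqrt]
  · apply Finset.sum_congr rfl
    intros i _
    rw [Real.norm_eq_abs, sq_abs]; ring
  · apply Finset.sum_nonneg; intros; positivity

lemma Q_eq (z x : En n) : Q z x = ‖x - z‖ ^ 2 := by
  have h : (∑ i, (x - z) i * (x - z) i) = ‖x - z‖ ^ 2 := sum_mul_self_eq (x - z)
  rw [← h]
  apply Finset.sum_congr rfl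
  intros i _
  have : (x - z) i = x i - z i := rfl
  rw [this]; ring

/-! ### constants -/

def KK (n : ℕ) (lam Lam mu : ℝ) : ℝ := 2 * (n * Lam + mu + 1) / lam

def Wc (n : ℕ) (lam Lam mu : ℝ) : ℝ :=
  Real.exp (-(KK n lam Lam mu) / 4) - Real.exp (-(KK n lam Lam mu))

def wlc (n : ℕ) (lam Lam mu : ℝ) : ℝ :=
  Real.exp (-(9/16 * KK n lam Lam mu)) - Real.exp (-(KK n lam Lam mu))

def th (n : ℕ) (lam Lam mu : ℝ) : ℝ := wlc n lam Lam mu / Wc n lam Lam mu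

lemma KK_pos {lam Lam mu : ℝ} (hlam : 0 < lam) (hLam : lam ≤ Lam) (hmu : 0 ≤ mu) :
    0 < KK n lam Lam mu := by
  have hnL : (0:ℝ) ≤ (n : ℝ) * Lam :=
    mul_nonneg (Nat.cast_nonneg n) (le_of_lt (lt_of_lt_of_le hlam hLam))
  apply div_pos (by linarith) hlam

lemma wlc_pos {lam Lam mu : ℝ} (hlam : 0 < lam) (hLam : lam ≤ Lam) (hmu : 0 ≤ mu) :
    0 < wlc n lam Lam mu := by
  have h := KK_pos (n := n) hlam hLam hmu
  have : -(KK n lam Lam mu) < -(9/16 * KK n lam Lam mu) := by linarith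
  exact sub_pos.2 (Real.exp_lt_exp.2 this)

lemma wlc_le_Wc {lam Lam mu : ℝ} (hlam : 0 < lam) (hLam : lam ≤ Lam) (hmu : 0 ≤ mu) :
    wlc n lam Lam mu ≤ Wc n lam Lam mu := by
  have h := KK_pos (n := n) hlam hLam hmu
  have : -(9/16 * KK n lam Lam mu) ≤ -(KK n lam Lam mu) / 4 := by linarith
  exact sub_le_sub_right (Real.exp_le_exp.2 this) _

lemma Wc_pos {lam Lam mu : ℝ} (hlam : 0 < lam) (hLam : lam ≤ Lam) (hmu : 0 ≤ mu) :
    0 < Wc n lam Lam mu :=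
  lt_of_lt_of_le (wlc_pos hlam hLam hmu) (wlc_le_Wc hlam hLam hmu)

lemma th_pos {lam Lam mu : ℝ} (hlam : 0 < lam) (hLam : lam ≤ Lam) (hmu : 0 ≤ mu) :
    0 < th n lam Lam mu :=
  div_pos (wlc_pos hlam hLam hmu) (Wc_pos hlam hLam hmu)

lemma th_le_one {lam Lam mu : ℝ} (hlam : 0 < lam) (hLam : lam ≤ Lam) (hmu : 0 ≤ mu) :
    th n lam Lam mu ≤ 1 :=
  div_le_one_of_le₀ (wlc_le_Wc hlam hLam hmu) (le_of_lt (Wc_pos hlam hLam hmu))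

/-! ### the rescaled barrier -/

def kk (n : ℕ) (lam Lam mu R : ℝ) : ℝ := KK n lam Lam mu / R^2

def ee (n : ℕ) (lam Lam mu : ℝ) : ℝ := Real.exp (-(KK n lam Lam mu))

def wfn (n : ℕ) (lam Lam mu : ℝ) (z : En n) (R : ℝ) (x : En n) : ℝ :=
  Real.exp (-(kk n lam Lam mu R) * Q z x) - ee n lam Lam mu

variable {lam Lam mu : ℝ}

lemma kk_pos (hlam : 0 < lam) (hLam : lam ≤ Lam) (hmu : 0 ≤ mu) {R : ℝ} (hR : 0 < R) :
    0 < kk n lam Lam mu R :=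
  div_pos (KK_pos hlam hLam hmu) (by positivity)

lemma kk_R2 {R : ℝ} (hR : 0 < R) : kk n lam Lam mu R * R^2 = KK n lam Lam mu := by
  rw [kk]; field_simp

lemma wfn_eq (z : En n) (R x : En n → ℝ → ℝ) : True := trivial

lemma wfn_val (z : En n) (R : ℝ) (x : En n) :
    wfn n lam Lam mu z R x
      = Real.exp (-(kk n lam Lam mu R * ‖x - z‖^2)) - ee n lam Lam mu := by
  rw [wfn, Q_eq, neg_mul]

lemma sq_le_sq' {a c : ℝ} (h0 : 0 ≤ a) (h : a ≤ c) : a^2 ≤ c^2 := by nlinarith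

lemma wfn_nonneg (hlam : 0 < lam) (hLam : lam ≤ Lam) (hmu : 0 ≤ mu) {z : En n} {R : ℝ}
    (hR : 0 < R) {x : En n} (hx : ‖x - z‖ ≤ R) : 0 ≤ wfn n lam Lam mu z R x := by
  have hk := kk_pos (n := n) hlam hLam hmu hR
  have h1 : kk n lam Lam mu R * ‖x - z‖^2 ≤ KK n lam Lam mu := by
    rw [← kk_R2 (n := n) (lam := lam) (Lam := Lam) (mu := mu) hR]
    exact mul_le_mul_of_nonneg_left (sq_le_sq' (norm_nonneg _) hx) hk.le
  have h2 := Real.exp_le_exp.2 (neg_le_neg h1)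
  rw [wfn_val, ee]
  linarith

lemma wfn_le (hlam : 0 < lam) (hLam : lam ≤ Lam) (hmu : 0 ≤ mu) {z : En n} {R : ℝ}
    (hR : 0 < R) {x : En n} (hx : R/2 ≤ ‖x - z‖) :
    wfn n lam Lam mu z R x ≤ Wc n lam Lam mu := by
  have hk := kk_pos (n := n) hlam hLam hmu hR
  have h0 : kk n lam Lam mu R * (R/2)^2 = KK n lam Lam mu / 4 := by
    rw [show ((R:ℝ)/2)^2 = R^2/4 by ring, ← kk_R2 (n := n) (lam := lam) (Lam := Lam) (mu := mu) hR]
    ring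
  have h1 : KK n lam Lam mu / 4 ≤ kk n lam Lam mu R * ‖x - z‖^2 := by
    rw [← h0]
    exact mul_le_mul_of_nonneg_left (sq_le_sq' (by linarith) hx) hk.le
  have h2 := Real.exp_le_exp.2 (show -(kk n lam Lam mu R * ‖x - z‖^2) ≤ -(KK n lam Lam mu)/4 by
    linarith)
  rw [wfn_val, Wc, ee]
  linarith

lemma wfn_ge (hlam : 0 < lam) (hLam : lam ≤ Lam) (hmu : 0 ≤ mu) {z : En n} {R : ℝ}
    (hR : 0 < R) {x : En n} (hx : ‖x - z‖ ≤ 3*R/4) :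
    wlc n lam Lam mu ≤ wfn n lam Lam mu z R x := by
  have hk := kk_pos (n := n) hlam hLam hmu hR
  have h0 : kk n lam Lam mu R * (3*R/4)^2 = 9/16 * KK n lam Lam mu := by
    rw [show ((3:ℝ)*R/4)^2 = 9/16*R^2 by ring, ← kk_R2 (n := n) (lam := lam) (Lam := Lam) (mu := mu) hR]
    ring
  have h1 : kk n lam Lam mu R * ‖x - z‖^2 ≤ 9/16 * KK n lam Lam mu := by
    rw [← h0]
    exact mul_le_mul_of_nonneg_left (sq_le_sq' (norm_nonneg _) hx) hk.le
  have h2 := Real.exp_le_exp.2 (show -(9/16 * KK n lam Lam mu) ≤ -(kk n lam Lam mu R * ‖x - z‖^2)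
    by linarith)
  rw [wfn_val, wlc, ee]
  linarith

lemma wfn_atR (hlam : 0 < lam) (hLam : lam ≤ Lam) (hmu : 0 ≤ mu) {z : En n} {R : ℝ}
    (hR : 0 < R) {x : En n} (hx : ‖x - z‖ = R) : wfn n lam Lam mu z R x = 0 := by
  rw [wfn_val, hx, kk_R2 (n := n) hR, ee, sub_self]

lemma wfn_athalf (hlam : 0 < lam) (hLam : lam ≤ Lam) (hmu : 0 ≤ mu) {z : En n} {R : ℝ}
    (hR : 0 < R) {x : En n} (hx : ‖x - z‖ = R/2) :
    wfn n lam Lam mu z R x = Wc n lam Lam mu := by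
  have h0 : kk n lam Lam mu R * (R/2)^2 = KK n lam Lam mu / 4 := by
    rw [show ((R:ℝ)/2)^2 = R^2/4 by ring, ← kk_R2 (n := n) (lam := lam) (Lam := Lam) (mu := mu) hR]
    ring
  rw [wfn_val, hx, h0, Wc, ee]
  ring_nf

lemma wfn_cont (z : En n) (R : ℝ) : Continuous (wfn n lam Lam mu z R) := by
  apply Continuous.sub _ continuous_const
  apply Real.continuous_exp.comp
  apply Continuous.mul continuous_const
  apply continuous_finset_sum
  intro i _
  exact ((EuclideanSpace.proj (𝕜 := ℝ) i).continuous.sub continuous_const).pow 2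

lemma barr_wfn (z : En n) (R b : ℝ) (x : En n) :
    barr z (kk n lam Lam mu R) (ee n lam Lam mu) b x = b * wfn n lam Lam mu z R x := rfl

/-! ### the barrier is a strict classical subsolution -/

set_option maxHeartbeats 1000000 in
lemma barrier_neg {Kh θh : ℝ} {F : OpType n}
    (hlam : 0 < lam) (hLam : lam ≤ Lam) (hmu : 0 ≤ mu)
    (hF : StructF n lam Lam mu Kh θh F)
    (z x₀ : En n) {R b : ℝ} (hR : 0 < R) (hb : 0 < b)
    (hx0 : x₀ ≠ 0) (hlow : R/2 ≤ ‖x₀ - z‖) (hgeo : ‖x₀ - z‖ ≤ ‖x₀‖) (e : ℝ) :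
    F (hess n (barr z (KK n lam Lam mu / R^2) e b) x₀)
      (grad n (barr z (KK n lam Lam mu / R^2) e b) x₀) x₀ < 0 := by
  set k : ℝ := KK n lam Lam mu / R^2 with hkdef
  have hKK := KK_pos (n := n) hlam hLam hmu
  have hk : 0 < k := div_pos hKK (by positivity)
  set E : ℝ := Ebar z k x₀ with hEdef
  have hE : 0 < E := Ebar_pos z k x₀
  set s : ℝ := ‖x₀ - z‖ with hsdef
  have hs : 0 < s := lt_of_lt_of_le (by linarith) hlow
  have hxpos : 0 < ‖x₀‖ := lt_of_lt_of_le hs hgeo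
  set v : Fin n → ℝ := fun i => x₀ i - z i with hvdef
  set β : ℝ := 4 * b * k ^ 2 * E with hβdef
  set γ : ℝ := -(2 * b * k * E) with hγdef
  have hβ : 0 ≤ β := by positivity
  have hγ : γ ≤ 0 := by simp only [hγdef, neg_nonpos]; positivity
  have hdot : dotProduct v v = s ^ 2 := by
    have h1 : dotProduct v v = ∑ i, (x₀ - z) i * (x₀ - z) i := rfl
    rw [h1, sum_mul_self_eq]
  -- Pucci bound
  have hP : PucciPlus n lam Lam (hess n (barr z k e b) x₀)
      ≤ -(β * (lam * s ^ 2)) + (2 * b * k * E) * (n * Lam) := by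
    apply pucciPlus_le hLam
    intro A hA
    rw [hess_barr]
    have h := neg_trace_le hA v hβ hγ
    rw [hdot] at h
    have hγγ : -γ = 2 * b * k * E := by rw [hγdef]; ring
    rw [hγγ] at h
    exact h
  -- gradient norm
  have hgradn : ‖grad n (barr z k e b) x₀‖ = 2 * b * k * E * s := by
    rw [grad_barr, norm_smul]
    have h1 : ‖(2 * b * (-k) * E : ℝ)‖ = 2 * b * k * E := by
      rw [Real.norm_eq_abs]
      have h2 : (2 * b * (-k) * E : ℝ) = -(2 * b * k * E) := by ring
      rw [h2, abs_neg, abs_of_pos (by positivity)]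
    rw [h1]
  have hF0 : F 0 0 x₀ = 0 := by
    have h := hF.homog 0 le_rfl 0 0 x₀ hx0
    simpa using h
  have hup := hF.ellip_upper (hess n (barr z k e b) x₀) 0 (grad n (barr z k e b) x₀) 0 x₀ hx0
  rw [hF0, sub_zero, sub_zero, sub_zero, hgradn] at hup
  clear_value β γ v E s
  -- the mu term
  have hmuterm : mu * ‖x₀‖⁻¹ * (2 * b * k * E * s) ≤ mu * (2 * b * k * E) := by
    have h1 : ‖x₀‖⁻¹ * s ≤ 1 := by
      rw [inv_mul_eq_div]
      exact (div_le_one hxpos).2 hgeo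
    have h0 : (0:ℝ) ≤ mu * (2 * b * k * E) := by positivity
    nlinarith [mul_le_mul_of_nonneg_left h1 h0, inv_nonneg.2 hxpos.le]
  -- numeric conclusion
  have hkl : k * (lam * (R/2)^2) = (n * Lam + mu + 1) / 2 := by
    rw [hkdef, KK]
    field_simp
  have hsq : (R/2)^2 ≤ s^2 := by nlinarith
  have h2 : (n * Lam + mu + 1) / 2 ≤ k * (lam * s ^ 2) := by
    rw [← hkl]
    have hkl0 : (0:ℝ) ≤ k * lam := mul_nonneg hk.le hlam.le
    nlinarith [mul_le_mul_of_nonneg_left hsq hkl0]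
  have h4 : (0:ℝ) ≤ 4 * b * k * E := by positivity
  have h3 := mul_le_mul_of_nonneg_left h2 h4
  have h3' : 2*b*k*E*(n*Lam) + 2*b*k*E*mu + 2*b*k*E ≤ β * (lam * s ^ 2) := by
    rw [hβdef]
    nlinarith [h3]
  have h2bkE : (0:ℝ) < 2*b*k*E := by positivity
  linarith [hup, hP, hmuterm, h3']

lemma barrier_neg' {Kh θh : ℝ} {F : OpType n}
    (hlam : 0 < lam) (hLam : lam ≤ Lam) (hmu : 0 ≤ mu)
    (hF : StructF n lam Lam mu Kh θh F)
    (z x₀ : En n) {R b : ℝ} (hR : 0 < R) (hb : 0 < b)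
    (hx0 : x₀ ≠ 0) (hlow : R/2 ≤ ‖x₀ - z‖) (hgeo : ‖x₀ - z‖ ≤ ‖x₀‖) :
    F (hess n (barr z (kk n lam Lam mu R) (ee n lam Lam mu) b) x₀)
      (grad n (barr z (kk n lam Lam mu R) (ee n lam Lam mu) b) x₀) x₀ < 0 :=
  barrier_neg hlam hLam hmu hF z x₀ hR hb hx0 hlow hgeo (ee n lam Lam mu)

/-! ### membership helper -/

lemma mem_cb {z x : En n} {r : ℝ} (h : ‖x - z‖ ≤ r) : x ∈ closedBall z r := by
  rw [mem_closedBall, dist_eq_norm]; exact h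

lemma cb_norm {z x : En n} {r : ℝ} (h : x ∈ closedBall z r) : ‖x - z‖ ≤ r := by
  rwa [mem_closedBall, dist_eq_norm] at h

/-! ### the oscillation/growth step lemma -/

set_option maxHeartbeats 1000000 in
lemma step (hn : 2 ≤ n) {Kh θh : ℝ} {F : OpType n}
    (hlam : 0 < lam) (hLam : lam ≤ Lam) (hmu : 0 ≤ mu)
    (hF : StructF n lam Lam mu Kh θh F)
    {ω : Set (En n)} {u : En n → ℝ}
    (hcont : ContinuousOn u (cone n ω)) (hpos : ∀ x ∈ cone n ω, 0 < u x)
    (hsup : ViscSupersol n (fun M p _ x => F M p x) (cone n ω) u)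
    {z : En n} {R : ℝ} (hR : 0 < R)
    (hball : closedBall z R ⊆ cone n ω)
    (hgeo : ∀ x ∈ closedBall z R, ‖x - z‖ ≤ ‖x‖)
    {y : En n} (hy : ‖y - z‖ ≤ 3*R/4) :
    th n lam Lam mu * sInf (u '' closedBall z (R/2)) ≤ u y := by
  have hWc := Wc_pos (n := n) hlam hLam hmu
  have hwlc := wlc_pos (n := n) hlam hLam hmu
  have hth := th_pos (n := n) hlam hLam hmu
  have hth1 := th_le_one (n := n) hlam hLam hmu
  -- the annulus
  set Ann : Set (En n) := {x | R/2 ≤ ‖x - z‖ ∧ ‖x - z‖ ≤ R} with hAnndef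
  have hAnnmem : ∀ {x : En n}, x ∈ Ann ↔ (R/2 ≤ ‖x - z‖ ∧ ‖x - z‖ ≤ R) := fun {x} => Iff.rfl
  have hAnnclosed : IsClosed Ann := by
    have hcn : Continuous fun x : En n => ‖x - z‖ := (continuous_id.sub continuous_const).norm
    exact (isClosed_le continuous_const hcn).inter (isClosed_le hcn continuous_const)
  have hAnnsub : Ann ⊆ closedBall z R := fun x hx => mem_cb hx.2
  have hAnncone : Ann ⊆ cone n ω := fun x hx => hball (hAnnsub hx)
  have hAnncompact : IsCompact Ann :=
    (isCompact_closedBall z R).of_isClosed_subset hAnnclosed hAnnsub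
  clear_value Ann
  -- a special point of the annulus
  have hn0 : 0 < n := Nat.lt_of_lt_of_le Nat.zero_lt_two hn
  obtain ⟨xb, hxbn⟩ : ∃ xb : En n, ‖xb - z‖ = 3*R/4 := by
    refine ⟨z + (3*R/4) • (EuclideanSpace.single (⟨0, hn0⟩ : Fin n) (1:ℝ)), ?_⟩
    rw [add_sub_cancel_left, norm_smul, EuclideanSpace.norm_single, norm_one, mul_one,
      Real.norm_eq_abs, abs_of_nonneg (by linarith : (0:ℝ) ≤ 3*R/4)]
  have hxbAnn : xb ∈ Ann := hAnnmem.2 ⟨by rw [hxbn]; linarith, by rw [hxbn]; linarith⟩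
  have hwfxb : 0 < wfn n lam Lam mu z R xb :=
    lt_of_lt_of_le hwlc (wfn_ge hlam hLam hmu hR (le_of_eq hxbn))
  -- minimum of u on the annulus
  have hucontA : ContinuousOn u Ann := hcont.mono hAnncone
  obtain ⟨xm, hxmA, hxmmin⟩ := hAnncompact.exists_isMinOn ⟨xb, hxbAnn⟩ hucontA
  have hum : 0 < u xm := hpos xm (hAnncone hxmA)
  -- the sliding family
  set S : Set ℝ := {c : ℝ | 0 ≤ c ∧ ∀ x ∈ Ann, c * wfn n lam Lam mu z R x ≤ u x} with hSdef
  have hS0 : (0:ℝ) ∈ S := ⟨le_rfl, fun x hx => by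
    rw [zero_mul]; exact (hpos x (hAnncone hx)).le⟩
  have hSbdd : BddAbove S := by
    refine ⟨u xb / wfn n lam Lam mu z R xb, fun c hc => ?_⟩
    exact (le_div_iff₀ hwfxb).2 (hc.2 xb hxbAnn)
  set bb : ℝ := sSup S with hbbdef
  have hbb0 : 0 ≤ bb := le_csSup hSbdd hS0
  have hbS : ∀ x ∈ Ann, bb * wfn n lam Lam mu z R x ≤ u x := by
    intro x hx
    rcases eq_or_lt_of_le (wfn_nonneg hlam hLam hmu hR (hAnnmem.1 hx).2) with h | h
    · rw [← h, mul_zero]; exact (hpos x (hAnncone hx)).le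
    · have hle : bb ≤ u x / wfn n lam Lam mu z R x :=
        csSup_le ⟨0, hS0⟩ (fun c hc => (le_div_iff₀ h).2 (hc.2 x hx))
      exact (le_div_iff₀ h).1 hle
  have hbb_lb : u xm / Wc n lam Lam mu ≤ bb := by
    apply le_csSup hSbdd
    constructor
    · exact (div_pos hum hWc).le
    · intro x hx
      have h1 : wfn n lam Lam mu z R x ≤ Wc n lam Lam mu :=
        wfn_le hlam hLam hmu hR (hAnnmem.1 hx).1
      have h2 : u xm / Wc n lam Lam mu * Wc n lam Lam mu = u xm :=
        div_mul_cancel₀ _ (ne_of_gt hWc)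
      calc u xm / Wc n lam Lam mu * wfn n lam Lam mu z R x
          ≤ u xm / Wc n lam Lam mu * Wc n lam Lam mu :=
            mul_le_mul_of_nonneg_left h1 (div_pos hum hWc).le
      _ = u xm := h2
      _ ≤ u x := hxmmin hx
  have hbbpos : 0 < bb := lt_of_lt_of_le (div_pos hum hWc) hbb_lb
  -- a touching point exists
  have htouch : ∃ x₀ ∈ Ann, u x₀ = bb * wfn n lam Lam mu z R x₀ := by
    by_contra hcon
    push_neg at hcon
    have hgpos : ∀ x ∈ Ann, 0 < u x - bb * wfn n lam Lam mu z R x := by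
      intro x hx
      rcases lt_or_eq_of_le (hbS x hx) with h | h
      · linarith
      · exact absurd h.symm (hcon x hx)
    have hgcont : ContinuousOn (fun x => u x - bb * wfn n lam Lam mu z R x) Ann :=
      hucontA.sub (Continuous.continuousOn (continuous_const.mul (wfn_cont z R)))
    obtain ⟨xe, hxeA, hxemin⟩ := hAnncompact.exists_isMinOn ⟨xb, hxbAnn⟩ hgcont
    have hε : 0 < u xe - bb * wfn n lam Lam mu z R xe := hgpos xe hxeA
    set ε : ℝ := u xe - bb * wfn n lam Lam mu z R xe with hεdef
    have hεW : 0 < ε / Wc n lam Lam mu := div_pos hε hWc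
    have hmem : bb + ε / Wc n lam Lam mu ∈ S := by
      constructor
      · linarith
      · intro x hx
        have h1 : ε / Wc n lam Lam mu * wfn n lam Lam mu z R x ≤ ε := by
          calc ε / Wc n lam Lam mu * wfn n lam Lam mu z R x
              ≤ ε / Wc n lam Lam mu * Wc n lam Lam mu :=
                mul_le_mul_of_nonneg_left (wfn_le hlam hLam hmu hR (hAnnmem.1 hx).1) hεW.le
          _ = ε := div_mul_cancel₀ _ (ne_of_gt hWc)
        have h2 : ε ≤ u x - bb * wfn n lam Lam mu z R x := hxemin hx
        have h3 : (bb + ε / Wc n lam Lam mu) * wfn n lam Lam mu z R x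
            = bb * wfn n lam Lam mu z R x + ε / Wc n lam Lam mu * wfn n lam Lam mu z R x := by
          ring
        rw [h3]
        linarith
    have hcontra := le_csSup hSbdd hmem
    rw [← hbbdef] at hcontra
    linarith
  obtain ⟨x₀, hx₀A, hx₀eq⟩ := htouch
  have hx₀mem := hAnnmem.1 hx₀A
  -- the touching point is on the inner sphere
  have hup0 : 0 < u x₀ := hpos x₀ (hAnncone hx₀A)
  have hx₀lt : ‖x₀ - z‖ < R := by
    rcases lt_or_eq_of_le hx₀mem.2 with h | h
    · exact h
    · exfalso
      rw [wfn_atR hlam hLam hmu hR h, mul_zero] at hx₀eq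
      linarith
  have hx₀half : ‖x₀ - z‖ ≤ R/2 := by
    by_contra hgt
    push_neg at hgt
    -- viscosity contradiction with the barrier
    have hφc : ContDiff ℝ 2 (barr z (kk n lam Lam mu R) (ee n lam Lam mu) bb) :=
      contDiff_barr z _ _ bb
    have hx₀cone : x₀ ∈ cone n ω := hAnncone hx₀A
    have hOopen : IsOpen (ball z R ∩ (closedBall z (R/2))ᶜ) :=
      isOpen_ball.inter (Metric.isClosed_closedBall (x := z) (ε := R/2)).isOpen_compl
    have hx₀O : x₀ ∈ ball z R ∩ (closedBall z (R/2))ᶜ := by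
      constructor
      · rw [mem_ball, dist_eq_norm]; exact hx₀lt
      · intro hc
        exact absurd (cb_norm hc) (not_le.2 hgt)
    have hOAnn : (ball z R ∩ (closedBall z (R/2))ᶜ) ⊆ Ann := by
      rintro x ⟨h1, h2⟩
      rw [mem_ball, dist_eq_norm] at h1
      refine hAnnmem.2 ⟨?_, h1.le⟩
      by_contra h3
      push_neg at h3
      exact h2 (mem_cb h3.le)
    have hmin : IsLocalMinOn
        (fun x => u x - barr z (kk n lam Lam mu R) (ee n lam Lam mu) bb x) (cone n ω) x₀ := by
      apply Filter.eventually_of_mem (mem_nhdsWithin_of_mem_nhds (hOopen.mem_nhds hx₀O))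
      intro x hx
      have hxA := hOAnn hx
      have h1 : bb * wfn n lam Lam mu z R x ≤ u x := hbS x hxA
      show u x₀ - barr z (kk n lam Lam mu R) (ee n lam Lam mu) bb x₀
          ≤ u x - barr z (kk n lam Lam mu R) (ee n lam Lam mu) bb x
      rw [barr_wfn, barr_wfn, ← hx₀eq]
      linarith
    have hvis : 0 ≤ F (hess n (barr z (kk n lam Lam mu R) (ee n lam Lam mu) bb) x₀)
        (grad n (barr z (kk n lam Lam mu R) (ee n lam Lam mu) bb) x₀) x₀ :=
      hsup _ hφc x₀ hx₀cone hmin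
    have hx₀geo : ‖x₀ - z‖ ≤ ‖x₀‖ := hgeo x₀ (hAnnsub hx₀A)
    have hx₀ne : x₀ ≠ 0 := by
      have h7 : 0 < ‖x₀‖ := lt_of_lt_of_le (by linarith) hx₀geo
      exact norm_pos_iff.1 h7
    have hneg := barrier_neg' hlam hLam hmu hF z x₀ hR hbbpos hx₀ne (by linarith) hx₀geo
    linarith
  -- conclude : bb ≥ m / Wc
  have hx₀R2 : ‖x₀ - z‖ = R/2 := le_antisymm hx₀half hx₀mem.1
  have hwfx₀ : wfn n lam Lam mu z R x₀ = Wc n lam Lam mu := wfn_athalf hlam hLam hmu hR hx₀R2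
  set m : ℝ := sInf (u '' closedBall z (R/2)) with hmdef
  have hibdd : BddBelow (u '' closedBall z (R/2)) := by
    refine ⟨0, ?_⟩
    rintro t ⟨x, hx, rfl⟩
    exact (hpos x (hball (closedBall_subset_closedBall (by linarith) hx))).le
  have hine : (u '' closedBall z (R/2)).Nonempty :=
    ⟨u x₀, mem_image_of_mem u (mem_cb (le_of_eq hx₀R2))⟩
  have hm0 : 0 ≤ m := le_csInf hine (by
    rintro t ⟨x, hx, rfl⟩
    exact (hpos x (hball (closedBall_subset_closedBall (by linarith) hx))).le)
  have hmle : m ≤ u x₀ := csInf_le hibdd (mem_image_of_mem u (mem_cb (le_of_eq hx₀R2)))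
  have hbbm : m / Wc n lam Lam mu ≤ bb := by
    rw [div_le_iff₀ hWc]
    calc m ≤ u x₀ := hmle
    _ = bb * wfn n lam Lam mu z R x₀ := hx₀eq
    _ = bb * Wc n lam Lam mu := by rw [hwfx₀]
  -- final : two cases for y
  rcases le_or_gt (R/2) (‖y - z‖) with hy2 | hy2
  · have hyA : y ∈ Ann := hAnnmem.2 ⟨hy2, by linarith⟩
    have h1 : bb * wfn n lam Lam mu z R y ≤ u y := hbS y hyA
    have h2 : wlc n lam Lam mu ≤ wfn n lam Lam mu z R y := wfn_ge hlam hLam hmu hR hy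
    have h3 : m / Wc n lam Lam mu * wfn n lam Lam mu z R y ≤ bb * wfn n lam Lam mu z R y :=
      mul_le_mul_of_nonneg_right hbbm (wfn_nonneg hlam hLam hmu hR (by linarith))
    have h4 : m / Wc n lam Lam mu * wlc n lam Lam mu
        ≤ m / Wc n lam Lam mu * wfn n lam Lam mu z R y :=
      mul_le_mul_of_nonneg_left h2 (div_nonneg hm0 hWc.le)
    have h5 : th n lam Lam mu * m = m / Wc n lam Lam mu * wlc n lam Lam mu := by
      rw [th]; ring
    linarith
  · have hmy : m ≤ u y := csInf_le hibdd (mem_image_of_mem u (mem_cb hy2.le))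
    have h6 := mul_le_mul_of_nonneg_right hth1 hm0
    rw [one_mul] at h6
    linarith

/-! ### geometry of the cone -/

lemma geom {σ₀ σ : ℝ} (hσ₀ : σ₀ ∈ Ioc (0:ℝ) 1) (hσ : σ ≤ 1 - σ₀) {ξ : En n} (hξ : ‖ξ‖ = 1)
    {ω : Set (En n)} (hω : ∀ x : En n, ‖x‖ = 1 → σ < (inner ℝ x ξ : ℝ) → x ∈ ω)
    {t : ℝ} (ht : 1 ≤ t) (ht2 : t ≤ 2) {x : En n} (hx : ‖x - t • ξ‖ ≤ σ₀/16) :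
    x ∈ cone n ω ∧ 1/2 ≤ ‖x‖ := by
  obtain ⟨hσp, hσ1⟩ := hσ₀
  have htξ : ‖t • ξ‖ = t := by
    rw [norm_smul, hξ, mul_one, Real.norm_eq_abs, abs_of_pos (by linarith)]
  have hnl : t - σ₀/16 ≤ ‖x‖ := by
    have h := norm_sub_norm_le (t • ξ) x
    rw [htξ, norm_sub_rev] at h
    linarith
  have hnu : ‖x‖ ≤ t + σ₀/16 := by
    have h := norm_sub_norm_le x (t • ξ)
    rw [htξ] at h
    linarith
  have hx0 : 1/2 ≤ ‖x‖ := by linarith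
  have hxne : x ≠ 0 := norm_pos_iff.1 (by linarith)
  have hip : t - σ₀/16 ≤ (inner ℝ x ξ : ℝ) := by
    have e : (inner ℝ (x - t • ξ) ξ : ℝ) = (inner ℝ x ξ : ℝ) - t := by
      rw [inner_sub_left, real_inner_smul_left, real_inner_self_eq_norm_mul_norm, hξ]
      ring
    have h2 : |(inner ℝ (x - t • ξ) ξ : ℝ)| ≤ σ₀/16 := by
      calc |(inner ℝ (x - t • ξ) ξ : ℝ)| ≤ ‖x - t • ξ‖ * ‖ξ‖ := abs_real_inner_le_norm _ _
      _ = ‖x - t • ξ‖ := by rw [hξ, mul_one]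
      _ ≤ σ₀/16 := hx
    have h3 := (abs_le.1 h2).1
    linarith [e ▸ h3]
  have hkey : (1 - σ₀) * ‖x‖ < (inner ℝ x ξ : ℝ) := by
    have h4 : (1 - σ₀) * ‖x‖ ≤ (1 - σ₀) * (t + σ₀/16) :=
      mul_le_mul_of_nonneg_left hnu (by linarith)
    have h5 : σ₀ * 1 ≤ σ₀ * t := mul_le_mul_of_nonneg_left ht hσp.le
    nlinarith
  have hxp : 0 < ‖x‖ := by linarith
  have hnorm : ‖(‖x‖⁻¹ • x)‖ = 1 := norm_smul_inv_norm hxne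
  have hin2 : σ < (inner ℝ ((‖x‖⁻¹ • x : En n)) ξ : ℝ) := by
    rw [real_inner_smul_left, inv_mul_eq_div]
    have h3 : 1 - σ₀ < (inner ℝ x ξ : ℝ) / ‖x‖ := by
      rw [lt_div_iff₀ hxp]
      linarith [hkey]
    linarith
  exact ⟨⟨hxne, hω _ hnorm hin2⟩, hx0⟩

end S13

/-- **Lemma 3.2 (upper bound for `α⁺`).**
If `ω ⊇ {x ∈ S^{n-1} : x·ξ > σ}` with `σ ≤ 1 - σ₀`, then `α⁺(F, ω) ≤ C` where `C`
depends only on `n, λ, Λ, μ` and `σ₀`. -/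
theorem stmt_13 (n : ℕ) (hn : 2 ≤ n) (lam Lam mu σ₀ : ℝ)
    (hlam : 0 < lam) (hlamLam : lam ≤ Lam) (hmu : 0 ≤ mu) (hσ₀ : σ₀ ∈ Ioc (0 : ℝ) 1) :
    ∃ C : ℝ, 0 < C ∧ ∀ ξ : En n, ‖ξ‖ = 1 → ∀ σ : ℝ, σ ≤ 1 - σ₀ →
      ∀ ω : Set (En n), GoodCone n ω →
      (∀ x : En n, ‖x‖ = 1 → σ < (inner ℝ x ξ : ℝ) → x ∈ ω) →
      ∀ (K θ : ℝ) (F : OpType n), StructF n lam Lam mu K θ F →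
      alphaPlus n F ω ≤ C := by
  classical
  have hθp := S13.th_pos (n := n) hlam hlamLam hmu
  have hθ1 := S13.th_le_one (n := n) hlam hlamLam hmu
  obtain ⟨hσp, hσ1⟩ := hσ₀
  set M : ℕ := ⌈(512:ℝ)/σ₀⌉₊ with hMdef
  have hMge : (512:ℝ)/σ₀ ≤ (M:ℝ) := Nat.le_ceil _
  have hMp : 0 < M := Nat.ceil_pos.2 (by positivity)
  have hMR : (0:ℝ) < (M:ℝ) := by exact_mod_cast hMp
  set C : ℝ := max 1 ((M : ℝ) * (-Real.log (S13.th n lam Lam mu)) / Real.log 2) with hCdef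
  refine ⟨C, lt_of_lt_of_le one_pos (le_max_left _ _), ?_⟩
  intro ξ hξ σ hσ ω hgood hω Kc θc F hF
  apply Real.sSup_le _ (le_trans zero_le_one (le_max_left _ _))
  intro α hα
  obtain ⟨hαpos, u, ⟨hucont, huhom⟩, hupos, husup⟩ := hα
  -- the radius
  set R : ℝ := σ₀/32 with hRdef
  have hR : 0 < R := by rw [hRdef]; positivity
  have hR1 : R ≤ 1/32 := by rw [hRdef]; linarith
  -- balls near the axis are inside the cone
  have hgeoball : ∀ t : ℝ, 1 ≤ t → t ≤ 2 → ∀ c : En n, ‖c - t • ξ‖ ≤ σ₀/32 →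
      (closedBall c R ⊆ cone n ω) ∧ (∀ x ∈ closedBall c R, ‖x - c‖ ≤ ‖x‖) := by
    intro t ht ht2 c hc
    have hgx : ∀ x ∈ closedBall c R, x ∈ cone n ω ∧ 1/2 ≤ ‖x‖ := by
      intro x hx
      have h1 : ‖x - c‖ ≤ R := S13.cb_norm hx
      have h2 : ‖x - t • ξ‖ ≤ σ₀/16 := by
        calc ‖x - t • ξ‖ = ‖(x - c) + (c - t • ξ)‖ := by rw [sub_add_sub_cancel]
        _ ≤ ‖x - c‖ + ‖c - t • ξ‖ := norm_add_le _ _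
        _ ≤ σ₀/16 := by rw [hRdef] at h1; linarith
      exact S13.geom ⟨hσp, hσ1⟩ hσ hξ hω ht ht2 h2
    constructor
    · exact fun x hx => (hgx x hx).1
    · intro x hx
      have h1 : ‖x - c‖ ≤ R := S13.cb_norm hx
      have h2 := (hgx x hx).2
      linarith
  -- base point: minimum on the ball around ξ
  have hbase := hgeoball 1 le_rfl (by norm_num) ξ (by rw [one_smul, sub_self, norm_zero]; positivity)
  have hball0 : closedBall ξ (R/2) ⊆ cone n ω :=
    subset_trans (closedBall_subset_closedBall (by linarith)) hbase.1
  obtain ⟨xs, hxsmem, hxsmin⟩ := (isCompact_closedBall ξ (R/2)).exists_isMinOn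
    ⟨ξ, mem_closedBall_self (by linarith)⟩ (hucont.mono hball0)
  have hxscone : xs ∈ cone n ω := hball0 hxsmem
  have hm₀ : 0 < u xs := hupos xs hxscone
  have hxsd : ‖xs - ξ‖ ≤ R/2 := S13.cb_norm hxsmem
  -- the chain of centers
  set zc : ℕ → En n := fun j => ξ + ((j:ℝ)/(M:ℝ)) • ((2:ℝ) • xs - ξ) with hzcdef
  have hjM : ∀ j : ℕ, j ≤ M → (0:ℝ) ≤ (j:ℝ)/(M:ℝ) ∧ (j:ℝ)/(M:ℝ) ≤ 1 := by
    intro j hj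
    constructor
    · positivity
    · rw [div_le_one hMR]; exact_mod_cast hj
  have hzcax : ∀ j : ℕ, j ≤ M → ‖zc j - (1 + (j:ℝ)/(M:ℝ)) • ξ‖ ≤ σ₀/32 := by
    intro j hj
    have hv : zc j - (1 + (j:ℝ)/(M:ℝ)) • ξ = ((j:ℝ)/(M:ℝ)) • ((2:ℝ) • (xs - ξ)) := by
      rw [hzcdef]; module
    rw [hv, norm_smul, norm_smul]
    have h1 := hjM j hj
    have h2 : ‖(2:ℝ)‖ = 2 := by norm_num
    rw [h2, Real.norm_eq_abs, abs_of_nonneg h1.1]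
    calc (j:ℝ)/(M:ℝ) * (2 * ‖xs - ξ‖) ≤ 1 * (2 * (R/2)) := by
          apply mul_le_mul h1.2 (by linarith) (by positivity) zero_le_one
    _ = R := by ring
    _ ≤ σ₀/32 := le_of_eq hRdef.symm
  have htrange : ∀ j : ℕ, j ≤ M → 1 ≤ 1 + (j:ℝ)/(M:ℝ) ∧ 1 + (j:ℝ)/(M:ℝ) ≤ 2 := by
    intro j hj
    have h1 := hjM j hj
    constructor <;> linarith [h1.1, h1.2]
  have hstepn : ∀ j : ℕ, ‖zc (j+1) - zc j‖ ≤ R/8 := by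
    intro j
    have hv : zc (j+1) - zc j = ((1:ℝ)/(M:ℝ)) • ((2:ℝ) • xs - ξ) := by
      rw [hzcdef]
      push_cast
      module
    have hdir : ‖(2:ℝ) • xs - ξ‖ ≤ 2 := by
      have he : (2:ℝ) • xs - ξ = (2:ℝ) • (xs - ξ) + ξ := by module
      rw [he]
      calc ‖(2:ℝ) • (xs - ξ) + ξ‖ ≤ ‖(2:ℝ) • (xs - ξ)‖ + ‖ξ‖ := norm_add_le _ _
      _ = 2 * ‖xs - ξ‖ + 1 := by rw [norm_smul, hξ]; norm_num
      _ ≤ 2 := by linarith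
    rw [hv, norm_smul, Real.norm_eq_abs, abs_of_nonneg (by positivity)]
    have h8 : (1:ℝ)/(M:ℝ) ≤ σ₀/512 := by
      rw [div_le_div_iff₀ hMR (by positivity)]
      calc (1:ℝ) * 512 = (512/σ₀) * σ₀ := by field_simp
      _ ≤ (M:ℝ) * σ₀ := mul_le_mul_of_nonneg_right hMge hσp.le
      _ = σ₀ * (M:ℝ) := mul_comm _ _
    calc (1:ℝ)/(M:ℝ) * ‖(2:ℝ) • xs - ξ‖ ≤ (σ₀/512) * 2 :=
          mul_le_mul h8 hdir (norm_nonneg _) (by positivity)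
    _ = σ₀/256 := by ring
    _ = R/8 := by rw [hRdef]; ring
  -- the chain estimate
  have hchain : ∀ j : ℕ, j ≤ M → ∀ y : En n, ‖y - zc j‖ ≤ R/2 →
      (S13.th n lam Lam mu)^j * u xs ≤ u y := by
    intro j
    induction j with
    | zero =>
      intro _ y hy
      rw [pow_zero, one_mul]
      have hz0 : zc 0 = ξ := by rw [hzcdef]; simp
      rw [hz0] at hy
      exact hxsmin (S13.mem_cb hy)
    | succ j ih =>
      intro hj1 y hy
      have hj : j ≤ M := Nat.le_of_succ_le hj1
      have hyj : ‖y - zc j‖ ≤ 3*R/4 := by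
        calc ‖y - zc j‖ = ‖(y - zc (j+1)) + (zc (j+1) - zc j)‖ := by rw [sub_add_sub_cancel]
        _ ≤ ‖y - zc (j+1)‖ + ‖zc (j+1) - zc j‖ := norm_add_le _ _
        _ ≤ 3*R/4 := by linarith [hstepn j]
      have hball := hgeoball (1 + (j:ℝ)/(M:ℝ)) (htrange j hj).1 (htrange j hj).2 (zc j)
        (hzcax j hj)
      have hstep := S13.step hn hlam hlamLam hmu hF hucont hupos husup hR hball.1 hball.2 hyj
      have hsinf : (S13.th n lam Lam mu)^j * u xs ≤ sInf (u '' closedBall (zc j) (R/2)) := by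
        apply le_csInf ⟨u (zc j), mem_image_of_mem u (mem_closedBall_self (by linarith))⟩
        rintro t ⟨w, hw, rfl⟩
        exact ih hj w (S13.cb_norm hw)
      calc (S13.th n lam Lam mu)^(j+1) * u xs
          = S13.th n lam Lam mu * ((S13.th n lam Lam mu)^j * u xs) := by ring
      _ ≤ S13.th n lam Lam mu * sInf (u '' closedBall (zc j) (R/2)) :=
          mul_le_mul_of_nonneg_left hsinf hθp.le
      _ ≤ u y := hstep
  -- evaluate at the doubled point
  have hzM : zc M = (2:ℝ) • xs := by
    rw [hzcdef]
    simp only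
    rw [div_self (ne_of_gt hMR), one_smul]
    module
  have hfin : (S13.th n lam Lam mu)^M * u xs ≤ u ((2:ℝ) • xs) := by
    apply hchain M le_rfl
    rw [hzM, sub_self, norm_zero]
    linarith
  -- homogeneity
  have hhom := huhom xs hxscone 2 two_pos
  have h2α : (0:ℝ) < (2:ℝ)^(α:ℝ) := Real.rpow_pos_of_pos two_pos α
  have huy : u ((2:ℝ) • xs) = ((2:ℝ)^(α:ℝ))⁻¹ * u xs := by
    rw [hhom]
    field_simp
  rw [huy] at hfin
  have hθM : (S13.th n lam Lam mu)^M ≤ ((2:ℝ)^(α:ℝ))⁻¹ := by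
    have := (mul_le_mul_iff_of_pos_right hm₀).1 hfin
    exact this
  -- take logarithms
  have hθMp : 0 < (S13.th n lam Lam mu)^M := pow_pos hθp M
  have hlog := Real.log_le_log hθMp hθM
  rw [Real.log_pow, Real.log_inv, Real.log_rpow two_pos] at hlog
  have hlog2 : 0 < Real.log 2 := Real.log_pos one_lt_two
  have hfin2 : α ≤ (M : ℝ) * (-Real.log (S13.th n lam Lam mu)) / Real.log 2 := by
    rw [le_div_iff₀ hlog2]
    nlinarith [hlog]
  calc α ≤ (M : ℝ) * (-Real.log (S13.th n lam Lam mu)) / Real.log 2 := hfin2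
  _ ≤ C := le_max_right _ _
end
end

section
/- Let F satisfy the structural conditions, set α⁺ := α⁺(F,ω), and suppose 0 < α < α⁺. Then, with c := (1/2)·λ·α·(α⁺ − α), there exists a function u ∈ H_α(ω) with u > 0 in C_ω which is a viscosity supersolution of F(D²u,Du,x) ≥ c·|x|⁻²·u(x) in C_ω. -/
open Set Filter Topology Metric

noncomputable section

/-! ### Auxiliary lemmas -/

lemma cone_smul_mem {n : ℕ} {ω : Set (En n)} {x : En n} (hx : x ∈ cone n ω) {t : ℝ}
    (ht : 0 < t) : t • x ∈ cone n ω := by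
  have hxn : ‖x‖ ≠ 0 := norm_ne_zero_iff.2 hx.1
  refine ⟨smul_ne_zero ht.ne' hx.1, ?_⟩
  have h : ‖t • x‖⁻¹ • t • x = ‖x‖⁻¹ • x := by
    rw [norm_smul, Real.norm_eq_abs, abs_of_pos ht, smul_smul]
    congr 1
    field_simp
  rw [h]; exact hx.2

lemma pucci_bound (n : ℕ) (lam Lam : ℝ) (hlam : 0 < lam) (hle : lam ≤ Lam) (c : ℝ) (hc : 0 ≤ c)
    (P : En n) :
    PucciPlus n lam Lam (c • Matrix.of fun i j => P i * P j) ≤ -(lam * c * ∑ i, P i * P i) := by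
  classical
  have hmem : lam • (1 : Mat n) ∈ PucciSet n lam Lam := by
    constructor
    · simpa using (Matrix.PosSemidef.zero : (0 : Mat n).PosSemidef)
    · have h : Lam • (1 : Mat n) - lam • (1 : Mat n) = Matrix.diagonal (fun _ => Lam - lam) := by
        rw [← sub_smul, Matrix.smul_one_eq_diagonal]
      rw [h]
      refine Matrix.PosSemidef.diagonal ?_
      intro i
      simp only [Pi.zero_apply]
      linarith
  apply csSup_le ((Set.Nonempty.image _ ⟨lam • (1 : Mat n), hmem⟩))
  rintro y ⟨A, ⟨hA1, hA2⟩, rfl⟩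
  set Q : Fin n → ℝ := fun i => P i with hQ
  have hquad : lam * ∑ i, P i * P i ≤ ∑ i, P i * ∑ j, A i j * P j := by
    have h0 := hA1.dotProduct_mulVec_nonneg Q
    have hstar : star Q = Q := by
      funext i; simp [hQ]
    rw [hstar] at h0
    have hexp : dotProduct Q (Matrix.mulVec (A - lam • (1 : Mat n)) Q)
        = (∑ i, P i * ∑ j, A i j * P j) - lam * ∑ i, P i * P i := by
      rw [Matrix.sub_mulVec, dotProduct_sub, Matrix.smul_mulVec, Matrix.one_mulVec]
      simp only [dotProduct, Matrix.mulVec, Pi.smul_apply, smul_eq_mul, hQ,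
        Finset.mul_sum]
      congr 1
      apply Finset.sum_congr rfl; intro x _; ring
    rw [hexp] at h0
    linarith
  show -(Matrix.trace (A * (c • Matrix.of fun i j => P i * P j))) ≤ -(lam * c * ∑ i, P i * P i)
  have htr : Matrix.trace (A * (c • Matrix.of fun i j => P i * P j))
      = c * ∑ i, P i * ∑ j, A i j * P j := by
    simp only [Matrix.trace, Matrix.diag, Matrix.mul_apply, Matrix.smul_apply, Matrix.of_apply,
      smul_eq_mul, Finset.mul_sum]
    apply Finset.sum_congr rfl; intro i _
    apply Finset.sum_congr rfl; intro j _
    ring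
  rw [htr]
  nlinarith [mul_le_mul_of_nonneg_left hquad (mul_nonneg hlam.le hc)]

lemma exists_g (s₀ p₀ : ℝ) (hs₀ : 0 < s₀) :
    ∃ g : ℝ → ℝ, ContDiff ℝ 2 g ∧ (∀ s ∈ ball s₀ (s₀ / 4), g s = s ^ p₀) ∧
      deriv g s₀ = p₀ * s₀ ^ (p₀ - 1) ∧
      deriv (deriv g) s₀ = p₀ * (p₀ - 1) * s₀ ^ (p₀ - 2) := by
  have hr1 : (0:ℝ) < s₀ / 4 := by linarith
  have hr2 : s₀ / 4 < s₀ / 3 := by linarith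
  let ρ : ContDiffBump s₀ := ⟨s₀ / 4, s₀ / 3, hr1, hr2⟩
  have hρ : ContDiff ℝ 2 (ρ : ℝ → ℝ) := by exact_mod_cast ρ.contDiff (n := 2)
  have heq : ∀ s ∈ ball s₀ (s₀ / 4), ρ s * s ^ p₀ = s ^ p₀ := by
    intro s hs
    rw [ρ.one_of_mem_closedBall (ball_subset_closedBall hs), one_mul]
  have hev : (fun s => ρ s * s ^ p₀) =ᶠ[𝓝 s₀] fun s => s ^ p₀ := by
    filter_upwards [ball_mem_nhds s₀ hr1] with s hs using heq s hs
  refine ⟨fun s => ρ s * s ^ p₀, ?_, heq, ?_, ?_⟩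
  · rw [contDiff_iff_contDiffAt]
    intro s
    by_cases h : s₀ / 2 < s
    · exact (hρ.contDiffAt).mul (Real.contDiffAt_rpow_const_of_ne (by linarith))
    · push_neg at h
      have hev0 : (fun t : ℝ => ρ t * t ^ p₀) =ᶠ[𝓝 s] fun _ => (0:ℝ) := by
        filter_upwards [Iio_mem_nhds (show s < s₀ - s₀ / 3 by linarith)] with t ht
        have htn : t ∉ Function.support (ρ : ℝ → ℝ) := by
          rw [ρ.support_eq]
          intro hmem
          rw [mem_ball, Real.dist_eq, abs_lt] at hmem
          simp only [mem_Iio] at ht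
          have hro : ρ.rOut = s₀ / 3 := rfl
          rw [hro] at hmem
          linarith [hmem.1]
        have h0 : (ρ : ℝ → ℝ) t = 0 := Function.notMem_support.1 htn
        simp [h0]
      exact (contDiffAt_const (c := (0:ℝ))).congr_of_eventuallyEq hev0
  · rw [hev.deriv_eq, Real.deriv_rpow_const _ _]
  · have hev' := hev.deriv
    have hev2 : deriv (fun s : ℝ => s ^ p₀) =ᶠ[𝓝 s₀] fun s => p₀ * s ^ (p₀ - 1) := by
      filter_upwards [Ioi_mem_nhds hs₀] with s hs
      exact Real.deriv_rpow_const _ _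
    rw [(hev'.trans hev2).deriv_eq,
      deriv_const_mul _ (Real.differentiableAt_rpow_const_of_ne _ hs₀.ne'),
      Real.deriv_rpow_const _ _]
    ring_nf

lemma comp_grad_hess (n : ℕ) (φ : En n → ℝ) (hφ : ContDiff ℝ 2 φ) (g : ℝ → ℝ)
    (hg : ContDiff ℝ 2 g) (m : ℝ) (x₀ : En n) :
    grad n (fun x => g (φ x + m)) x₀ = deriv g (φ x₀ + m) • grad n φ x₀ ∧
    hess n (fun x => g (φ x + m)) x₀ = deriv g (φ x₀ + m) • hess n φ x₀ +
      deriv (deriv g) (φ x₀ + m) •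
        Matrix.of (fun i j => grad n φ x₀ i * grad n φ x₀ j) := by
  have h12 : ((1:WithTop ℕ∞) ≤ 2) := by norm_num
  have hφd : Differentiable ℝ φ := hφ.differentiable (by norm_num)
  have hgd : Differentiable ℝ g := hg.differentiable (by norm_num)
  set w : En n → ℝ := fun x => φ x + m with hw
  have hfd : ∀ y : En n, HasFDerivAt (fun x => g (φ x + m))
      (deriv g (w y) • fderiv ℝ φ y) y := by
    intro y
    have h1 : HasDerivAt g (deriv g (w y)) (w y) := (hgd (w y)).hasDerivAt
    have h2 : HasFDerivAt w (fderiv ℝ φ y) y := ((hφd y).hasFDerivAt).add_const m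
    exact h1.comp_hasFDerivAt y h2
  have hfun : ∀ j : Fin n, (fun y => fderiv ℝ (fun x => g (φ x + m)) y
      (EuclideanSpace.single j 1)) =
      fun y => deriv g (w y) * fderiv ℝ φ y (EuclideanSpace.single j 1) := by
    intro j
    funext y
    rw [(hfd y).fderiv]
    simp
  constructor
  · ext i
    show fderiv ℝ (fun x => g (φ x + m)) x₀ (EuclideanSpace.single i 1) = _
    rw [(hfd x₀).fderiv]
    simp [grad, hw]
  · have hΦ : ContDiff ℝ 1 (fderiv ℝ φ) := hφ.fderiv_right (by norm_num)
    have hg' : ContDiff ℝ 1 (deriv g) := by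
      have h2eq : ((2:WithTop ℕ∞) = 1 + 1) := by norm_num
      rw [h2eq, contDiff_succ_iff_deriv] at hg
      exact hg.2.2
    ext i j
    show fderiv ℝ (fun y => fderiv ℝ (fun x => g (φ x + m)) y (EuclideanSpace.single j 1)) x₀
        (EuclideanSpace.single i 1) = _
    rw [hfun j]
    have ha : HasFDerivAt (fun y => deriv g (w y))
        (deriv (deriv g) (w x₀) • fderiv ℝ φ x₀) x₀ := by
      have h1 : HasDerivAt (deriv g) (deriv (deriv g) (w x₀)) (w x₀) :=
        ((hg'.differentiable (by norm_num)) (w x₀)).hasDerivAt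
      have h2 : HasFDerivAt w (fderiv ℝ φ x₀) x₀ := ((hφd x₀).hasFDerivAt).add_const m
      exact h1.comp_hasFDerivAt x₀ h2
    have hb : DifferentiableAt ℝ (fun y => fderiv ℝ φ y (EuclideanSpace.single j 1)) x₀ :=
      ((hΦ.differentiable (by norm_num)) x₀).clm_apply (differentiableAt_const _)
    have hmul := ha.mul hb.hasFDerivAt
    rw [show (fun y => deriv g (w y) * fderiv ℝ φ y (EuclideanSpace.single j 1)) =
      (fun y => deriv g (w y)) * (fun y => fderiv ℝ φ y (EuclideanSpace.single j 1)) from rfl,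
      hmul.fderiv]
    simp only [ContinuousLinearMap.add_apply, ContinuousLinearMap.smul_apply, smul_eq_mul]
    show deriv g (w x₀) * fderiv ℝ (fun y => fderiv ℝ φ y (EuclideanSpace.single j 1)) x₀
        (EuclideanSpace.single i 1) + fderiv ℝ φ x₀ (EuclideanSpace.single j 1) *
        (deriv (deriv g) (w x₀) * fderiv ℝ φ x₀ (EuclideanSpace.single i 1)) = _
    simp only [Matrix.add_apply, Matrix.smul_apply, Matrix.of_apply, smul_eq_mul, hess, grad]
    ring

set_option maxHeartbeats 1000000 in
/-- **Lemma 4.1 (strict supersolutions below `α⁺`).**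
For `0 < α < α⁺(F, ω)` there is a positive `u ∈ H_α(ω)` with
`F(D²u, Du, x) ≥ c |x|⁻² u` in `C_ω`, where `c = λ α (α⁺ - α) / 2`. -/
theorem stmt_14 (n : ℕ) (hn : 2 ≤ n) (lam Lam mu K θ : ℝ) (ω : Set (En n)) (F : OpType n)
    (hω : GoodCone n ω) (hF : StructF n lam Lam mu K θ F)
    (α : ℝ) (hα : 0 < α) (hα' : α < alphaPlus n F ω) :
    ∃ u : En n → ℝ, Hhom n ω α u ∧ (∀ x ∈ cone n ω, 0 < u x) ∧
      ViscSupersol n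
        (fun M p z x =>
          F M p x - (1 / 2 * lam * α * (alphaPlus n F ω - α)) * (‖x‖ ^ 2)⁻¹ * z)
        (cone n ω) u := by
  classical
  set a' := alphaPlus n F ω with ha'
  have hSne : (alphaPlusSet n F ω).Nonempty := by
    by_contra h
    rw [Set.not_nonempty_iff_eq_empty] at h
    have h0 : a' = 0 := by rw [ha', alphaPlus, h, Real.sSup_empty]
    rw [h0] at hα'
    linarith
  have hmax : max α ((α + a') / 2) < a' := max_lt hα' (by linarith)
  obtain ⟨β, hβS, hβgt⟩ := exists_lt_of_lt_csSup hSne hmax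
  obtain ⟨hβpos, v, hv_hom, hv_pos, hv_sup⟩ := hβS
  have hαβ : α < β := lt_of_le_of_lt (le_max_left _ _) hβgt
  have hβhalf : (α + a') / 2 < β := lt_of_le_of_lt (le_max_right _ _) hβgt
  set γ := α / β with hγ
  have hγpos : 0 < γ := div_pos hα hβpos
  set u : En n → ℝ := fun x => v x ^ γ with hu
  have hu_pos : ∀ x ∈ cone n ω, 0 < u x := fun x hx => Real.rpow_pos_of_pos (hv_pos x hx) γ
  have hu_cont : ContinuousOn u (cone n ω) :=
    hv_hom.1.rpow_const (fun x _ => Or.inr hγpos.le)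
  have hβγ : β * γ = α := by
    rw [hγ]; field_simp
  have hγp₀' : γ * (β / α) = 1 := by
    rw [hγ]; field_simp
  have hu_hom : ∀ x ∈ cone n ω, ∀ t : ℝ, 0 < t → u x = t ^ α * u (t • x) := by
    intro x hx t ht
    have h1 := hv_hom.2 x hx t ht
    have htx : t • x ∈ cone n ω := cone_smul_mem hx ht
    show v x ^ γ = t ^ α * v (t • x) ^ γ
    rw [h1, Real.mul_rpow (Real.rpow_nonneg ht.le β) (hv_pos _ htx).le,
      ← Real.rpow_mul ht.le, hβγ]
  refine ⟨u, ⟨hu_cont, hu_hom⟩, hu_pos, ?_⟩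
  intro φ hφ x₀ hx₀ hmin
  have hx₀ne : x₀ ≠ 0 := hx₀.1
  have hnx₀ : 0 < ‖x₀‖ := norm_pos_iff.2 hx₀ne
  set s₀ := u x₀ with hs₀def
  have hs₀ : 0 < s₀ := hu_pos x₀ hx₀
  set m := s₀ - φ x₀ with hm
  set p₀ := β / α with hp₀def
  have hp₀ : 1 < p₀ := (one_lt_div hα).2 hαβ
  obtain ⟨g, hg2, hgeq, hgd1, hgd2⟩ := exists_g s₀ p₀ hs₀
  set c₁ := p₀ * s₀ ^ (p₀ - 1) with hc₁def
  set c₂ := p₀ * (p₀ - 1) * s₀ ^ (p₀ - 2) with hc₂def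
  have hc₁ : 0 < c₁ := mul_pos (by linarith) (Real.rpow_pos_of_pos hs₀ _)
  have hc₂ : 0 < c₂ :=
    mul_pos (mul_pos (by linarith) (by linarith)) (Real.rpow_pos_of_pos hs₀ _)
  set ψ : En n → ℝ := fun x => g (φ x + m) with hψdef
  have hψ2 : ContDiff ℝ 2 ψ := hg2.comp (hφ.add contDiff_const)
  have hwx₀ : φ x₀ + m = s₀ := by rw [hm]; ring
  -- eventual facts near x₀ within the cone
  have hev1 : ∀ᶠ x in 𝓝[cone n ω] x₀, φ x + m ≤ u x := by
    have h : ∀ᶠ x in 𝓝[cone n ω] x₀, u x₀ - φ x₀ ≤ u x - φ x := hmin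
    filter_upwards [h] with x hx
    rw [hm, hs₀def]
    linarith
  have hball : ∀ᶠ y in 𝓝 s₀, y ∈ ball s₀ (s₀ / 4) :=
    isOpen_ball.eventually_mem (mem_ball_self (by linarith))
  have hev2 : ∀ᶠ x in 𝓝[cone n ω] x₀, u x ∈ ball s₀ (s₀ / 4) :=
    (hu_cont x₀ hx₀).eventually hball
  have hev3 : ∀ᶠ x in 𝓝[cone n ω] x₀, φ x + m ∈ ball s₀ (s₀ / 4) := by
    have hφc : Filter.Tendsto (fun x => φ x + m) (𝓝[cone n ω] x₀) (𝓝 (φ x₀ + m)) :=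
      ((hφ.continuous.tendsto x₀).add tendsto_const_nhds).mono_left nhdsWithin_le_nhds
    rw [hwx₀] at hφc
    exact hφc.eventually hball
  have hbpos : ∀ y : ℝ, y ∈ ball s₀ (s₀ / 4) → 0 < y := by
    intro y hy
    rw [mem_ball, Real.dist_eq, abs_lt] at hy
    linarith [hy.1]
  have hfu : ∀ x ∈ cone n ω, u x ^ p₀ = v x := by
    intro x hx
    show (v x ^ γ) ^ p₀ = v x
    rw [← Real.rpow_mul (hv_pos x hx).le, hp₀def, hγp₀', Real.rpow_one]
  have hψx₀ : ψ x₀ = v x₀ := by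
    show g (φ x₀ + m) = v x₀
    rw [hwx₀, hgeq s₀ (mem_ball_self (by linarith))]
    exact hfu x₀ hx₀
  have hmin2 : IsLocalMinOn (fun x => v x - ψ x) (cone n ω) x₀ := by
    show ∀ᶠ x in 𝓝[cone n ω] x₀, v x₀ - ψ x₀ ≤ v x - ψ x
    filter_upwards [hev1, hev2, hev3, self_mem_nhdsWithin] with x h1 h2 h3 hxc
    have hψx : ψ x = (φ x + m) ^ p₀ := hgeq _ h3
    have hle : (φ x + m) ^ p₀ ≤ u x ^ p₀ :=
      Real.rpow_le_rpow (hbpos _ h3).le h1 (by linarith)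
    have hvx := hfu x hxc
    rw [hψx₀, hψx, sub_self]
    linarith
  have h0 : 0 ≤ F (hess n ψ x₀) (grad n ψ x₀) x₀ := hv_sup ψ hψ2 x₀ hx₀ hmin2
  obtain ⟨hgrad, hhess⟩ := comp_grad_hess n φ hφ g hg2 m x₀
  rw [hwx₀, hgd1] at hgrad
  rw [hwx₀, hgd1, hgd2] at hhess
  set P := grad n φ x₀ with hP
  set A := hess n φ x₀ with hA
  set R : Mat n := Matrix.of (fun i j => P i * P j) with hR
  -- Pucci/ellipticity estimate
  have hFhom : F (c₁ • A) (c₁ • P) x₀ = c₁ * F A P x₀ := hF.homog c₁ hc₁.le A P x₀ hx₀ne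
  have hup := hF.ellip_upper (hess n ψ x₀) (c₁ • A) (grad n ψ x₀) (c₁ • P) x₀ hx₀ne
  have hMN : hess n ψ x₀ - c₁ • A = c₂ • R := by rw [hhess]; exact add_sub_cancel_left _ _
  have hpq : grad n ψ x₀ - c₁ • P = 0 := by rw [hgrad, sub_self]
  rw [hMN, hpq, norm_zero, mul_zero, add_zero, hFhom] at hup
  have hpucci := pucci_bound n lam Lam hF.lam_pos hF.lam_le c₂ hc₂.le P
  rw [← hR] at hpucci
  set S := ∑ i, P i * P i with hSdef
  have hkey : lam * c₂ * S ≤ c₁ * F A P x₀ := by linarith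
  -- radial derivative estimate
  have hevU : {x | φ x + m ≤ u x} ∈ 𝓝[cone n ω] x₀ := hev1
  rw [mem_nhdsWithin] at hevU
  obtain ⟨U, hUo, hx₀U, hUsub⟩ := hevU
  have hH : ∀ᶠ t in 𝓝 (1:ℝ), 0 ≤ s₀ * t ^ (-α) - (φ (t • x₀) + m) := by
    have hc : Continuous fun t : ℝ => t • x₀ := continuous_id.smul continuous_const
    have hU1 : ∀ᶠ t in 𝓝 (1:ℝ), t • x₀ ∈ U := by
      have h1U : (1:ℝ) • x₀ ∈ U := by rwa [one_smul]
      exact hc.continuousAt.eventually_mem (hUo.mem_nhds h1U)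
    filter_upwards [hU1, eventually_gt_nhds (zero_lt_one)] with t htU ht0
    have htc : t • x₀ ∈ cone n ω := cone_smul_mem hx₀ ht0
    have hsub : φ (t • x₀) + m ≤ u (t • x₀) := hUsub ⟨htU, htc⟩
    have htα : (0:ℝ) < t ^ α := Real.rpow_pos_of_pos ht0 α
    have hut : u (t • x₀) = s₀ * t ^ (-α) := by
      have hh := hu_hom x₀ hx₀ t ht0
      rw [Real.rpow_neg ht0.le]
      rw [← hs₀def] at hh
      rw [hh]
      field_simp
    rw [← hut]
    linarith
  have hd1 : HasDerivAt (fun t : ℝ => s₀ * t ^ (-α)) (s₀ * (-α)) 1 := by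
    have hd := (Real.hasDerivAt_rpow_const (p := -α) (Or.inl (one_ne_zero))).const_mul s₀
    simpa [Real.one_rpow] using hd
  have hφd : Differentiable ℝ φ := hφ.differentiable (by norm_num)
  have hd2 : HasDerivAt (fun t : ℝ => φ (t • x₀) + m) (fderiv ℝ φ x₀ x₀) 1 := by
    have hsm : HasDerivAt (fun t : ℝ => t • x₀) x₀ 1 := by
      simpa using (hasDerivAt_id (1:ℝ)).smul_const x₀
    have hl : HasFDerivAt φ (fderiv ℝ φ x₀) ((1:ℝ) • x₀) := by
      rw [one_smul]
      exact (hφd x₀).hasFDerivAt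
    exact (hl.comp_hasDerivAt 1 hsm).add_const m
  have hloc : IsLocalMin (fun t : ℝ => s₀ * t ^ (-α) - (φ (t • x₀) + m)) 1 := by
    have h1 : (fun t : ℝ => s₀ * t ^ (-α) - (φ (t • x₀) + m)) 1 = 0 := by
      show s₀ * (1:ℝ) ^ (-α) - (φ ((1:ℝ) • x₀) + m) = 0
      rw [Real.one_rpow, one_smul, hwx₀]
      ring
    exact hH.mono fun t ht => le_trans (le_of_eq h1) ht
  have hzero : s₀ * (-α) - fderiv ℝ φ x₀ x₀ = 0 :=
    hloc.hasDerivAt_eq_zero (hd1.sub hd2)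
  have hrad : fderiv ℝ φ x₀ x₀ = -(α * s₀) := by linarith
  have hx₀sum : x₀ = ∑ i, x₀ i • EuclideanSpace.single i (1:ℝ) := by
    ext j
    simp [EuclideanSpace.single_apply, Pi.single_apply]
  have hsum : fderiv ℝ φ x₀ x₀ = ∑ i, x₀ i * P i := by
    have hl : fderiv ℝ φ x₀ x₀
        = fderiv ℝ φ x₀ (∑ i, x₀ i • EuclideanSpace.single i (1:ℝ)) := by
      rw [← hx₀sum]
    rw [hl, map_sum]
    apply Finset.sum_congr rfl
    intro i _
    rw [map_smul]
    rfl
  have hip : (inner ℝ x₀ P : ℝ) = ∑ i, x₀ i * P i := by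
    simp [PiLp.inner_apply, RCLike.inner_apply, conj_trivial]
    exact Finset.sum_congr rfl fun i _ => mul_comm _ _
  have hinner : |∑ i, x₀ i * P i| ≤ ‖x₀‖ * ‖P‖ := by
    have h := abs_real_inner_le_norm x₀ P
    rwa [hip] at h
  have hPnorm : S = ‖P‖ ^ 2 := by
    rw [← real_inner_self_eq_norm_sq]
    simp only [hSdef, PiLp.inner_apply, RCLike.inner_apply, conj_trivial]
  have hPlow : α * s₀ ≤ ‖x₀‖ * ‖P‖ := by
    have hsv : ∑ i, x₀ i * P i = -(α * s₀) := by rw [← hsum, hrad]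
    calc α * s₀ = |∑ i, x₀ i * P i| := by
          rw [hsv, abs_neg, abs_of_pos (mul_pos hα hs₀)]
      _ ≤ ‖x₀‖ * ‖P‖ := hinner
  -- final arithmetic
  show 0 ≤ F A P x₀ - 1 / 2 * lam * α * (a' - α) * (‖x₀‖ ^ 2)⁻¹ * s₀
  set N2 := ‖x₀‖ ^ 2 with hN2
  have hN2pos : (0:ℝ) < N2 := by positivity
  have hsq : (α * s₀) ^ 2 ≤ N2 * S := by
    rw [hPnorm, hN2]
    calc (α * s₀) ^ 2 = (α * s₀) * (α * s₀) := by ring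
      _ ≤ (‖x₀‖ * ‖P‖) * (‖x₀‖ * ‖P‖) :=
          mul_self_le_mul_self (mul_pos hα hs₀).le hPlow
      _ = ‖x₀‖ ^ 2 * ‖P‖ ^ 2 := by ring
  have hc₂c₁ : c₂ * s₀ = c₁ * (p₀ - 1) := by
    rw [hc₁def, hc₂def]
    have hpow : s₀ ^ (p₀ - 2) * s₀ = s₀ ^ (p₀ - 1) := by
      rw [← Real.rpow_add_one hs₀.ne' (p₀ - 2)]
      ring_nf
    linear_combination (p₀ * (p₀ - 1)) * hpow
  have hS_lb : α ^ 2 * s₀ ^ 2 / N2 ≤ S := by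
    rw [div_le_iff₀ hN2pos]
    calc α ^ 2 * s₀ ^ 2 = (α * s₀) ^ 2 := by ring
      _ ≤ N2 * S := hsq
      _ = S * N2 := by ring
  have step1 : lam * c₂ * (α ^ 2 * s₀ ^ 2 / N2) ≤ c₁ * F A P x₀ := by
    refine le_trans ?_ hkey
    exact mul_le_mul_of_nonneg_left hS_lb (mul_pos hF.lam_pos hc₂).le
  have hc₂eq : c₂ = c₁ * (p₀ - 1) / s₀ := by
    rw [eq_div_iff hs₀.ne']
    exact hc₂c₁
  have step3 : lam * (p₀ - 1) * α ^ 2 * s₀ / N2 ≤ F A P x₀ := by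
    have heq : lam * c₂ * (α ^ 2 * s₀ ^ 2 / N2) = c₁ * (lam * (p₀ - 1) * α ^ 2 * s₀ / N2) := by
      rw [hc₂eq]
      field_simp
    rw [heq] at step1
    exact le_of_mul_le_mul_left step1 hc₁
  have hval : (p₀ - 1) * α ^ 2 = α * (β - α) := by
    rw [hp₀def]
    field_simp
  have hnum : 1 / 2 * lam * α * (a' - α) * s₀ ≤ lam * (p₀ - 1) * α ^ 2 * s₀ := by
    have hba : (a' - α) / 2 ≤ β - α := by linarith
    have hmono := mul_le_mul_of_nonneg_left hba
      (mul_pos (mul_pos hF.lam_pos hα) hs₀).le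
    calc 1 / 2 * lam * α * (a' - α) * s₀ = lam * α * s₀ * ((a' - α) / 2) := by ring
      _ ≤ lam * α * s₀ * (β - α) := hmono
      _ = lam * (p₀ - 1) * α ^ 2 * s₀ := by linear_combination (-(lam * s₀)) * hval
  have hfin : 1 / 2 * lam * α * (a' - α) * s₀ / N2 ≤ F A P x₀ := by
    refine le_trans ?_ step3
    rw [div_le_div_iff_of_pos_right hN2pos]
    exact hnum
  have hrewr : 1 / 2 * lam * α * (a' - α) * N2⁻¹ * s₀
      = 1 / 2 * lam * α * (a' - α) * s₀ / N2 := by ring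
  linarith [hfin, hrewr.le, hrewr.ge]
end
end

section
/- (Interpolation inequality.) Let n ≥ 1, γ ∈ (0,1], h₀ > 0, and let Ω ⊆ ℝⁿ be a nonempty bounded open set with the property that for every x ∈ Ω and every unit vector ν ∈ S^{n−1} there is a sign s ∈ {−1,+1} such that x + h·s·ν ∈ Ω for all h ∈ (0,h₀). Then there exists a constant C > 0, depending only on n, γ and h₀, such that for every continuously differentiable function u : Ω → ℝ with finite K₁ := sup_Ω |u| + sup_Ω |Du| + sup{ |Du(x)−Du(y)|/|x−y|^γ : x,y ∈ Ω, x ≠ y } and K₂ := sup_Ω |u|, one has sup_Ω |u| + sup_Ω |Du| ≤ C · K₁^{1/(1+γ)} · K₂^{γ/(1+γ)}. -/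
open Set Filter Topology Metric

noncomputable section

/-- Core estimate: for `y ∈ Ω` and `h ∈ (0, h₀)`, `‖u' y‖ * h ≤ 2K₂ + K₁ h^(1+γ)`. -/
lemma core_est (n : ℕ) (γ h₀ : ℝ) (hγ : γ ∈ Ioc (0 : ℝ) 1)
    (Ω : Set (En n)) (hΩopen : IsOpen Ω)
    (hΩseg : ∀ x ∈ Ω, ∀ ν : En n, ‖ν‖ = 1 → ∃ s : ℝ, (s = 1 ∨ s = -1) ∧
      ∀ h : ℝ, h ∈ Ioo (0 : ℝ) h₀ → x + (h * s) • ν ∈ Ω)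
    (u : En n → ℝ) (u' : En n → En n →L[ℝ] ℝ)
    (hd : ∀ x ∈ Ω, HasFDerivWithinAt u (u' x) Ω x)
    (K₁ K₂ : ℝ) (hK₁ : 0 ≤ K₁) (hK₂ : 0 ≤ K₂)
    (hub : ∀ x ∈ Ω, |u x| ≤ K₂)
    (hHol : ∀ x ∈ Ω, ∀ y ∈ Ω, ‖u' x - u' y‖ ≤ K₁ * ‖x - y‖ ^ γ)
    (y : En n) (hy : y ∈ Ω) (h : ℝ) (hh : h ∈ Ioo (0 : ℝ) h₀) :
    ‖u' y‖ * h ≤ 2 * K₂ + K₁ * h ^ (1 + γ) := by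
  obtain ⟨hhpos, hhlt⟩ := hh
  have hrhs : 0 ≤ 2 * K₂ + K₁ * h ^ (1 + γ) := by
    have : (0:ℝ) ≤ h ^ (1 + γ) := Real.rpow_nonneg hhpos.le _
    positivity
  -- key claim for unit vectors
  have key : ∀ ν : En n, ‖ν‖ = 1 → |u' y ν| * h ≤ 2 * K₂ + K₁ * h ^ (1 + γ) := by
    intro ν hν
    obtain ⟨s, hs, hmem⟩ := hΩseg y hy ν hν
    have hs1 : |s| = 1 := by rcases hs with rfl | rfl <;> norm_num
    set w : En n := s • ν with hw
    have hwnorm : ‖w‖ = 1 := by rw [hw, norm_smul, hν, Real.norm_eq_abs, hs1, mul_one]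
    set p : ℝ → En n := fun t => y + t • w with hp
    have hpΩ : ∀ t ∈ Icc (0:ℝ) h, p t ∈ Ω := by
      intro t ht
      rcases eq_or_lt_of_le ht.1 with rfl | htpos
      · simpa [hp] using hy
      · have : p t = y + (t * s) • ν := by
          simp [hp, hw, smul_smul]
        rw [this]
        exact hmem t ⟨htpos, lt_of_le_of_lt ht.2 hhlt⟩
    set c : ℝ := u' y w with hc
    set φ : ℝ → ℝ := fun t => u (p t) - t * c with hφ
    have hderiv : ∀ t ∈ Icc (0:ℝ) h,
        HasDerivWithinAt φ (u' (p t) w - c) (Icc (0:ℝ) h) t := by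
      intro t ht
      have h1 : HasDerivAt p w t := by
        have := ((hasDerivAt_id t).smul_const w).const_add y
        rw [one_smul] at this; exact this
      have h2 : HasFDerivAt u (u' (p t)) (p t) :=
        (hd _ (hpΩ t ht)).hasFDerivAt (hΩopen.mem_nhds (hpΩ t ht))
      have h3 : HasDerivAt (fun t => u (p t)) (u' (p t) w) t :=
        h2.comp_hasDerivAt t h1
      have h4 : HasDerivAt (fun t : ℝ => t * c) c t := by
        simpa using (hasDerivAt_id t).mul_const c
      exact (h3.sub h4).hasDerivWithinAt
    have hbound : ∀ t ∈ Icc (0:ℝ) h, ‖u' (p t) w - c‖ ≤ K₁ * h ^ γ := by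
      intro t ht
      have e1 : u' (p t) w - c = (u' (p t) - u' y) w := by simp [hc]
      rw [e1]
      calc ‖(u' (p t) - u' y) w‖ ≤ ‖u' (p t) - u' y‖ * ‖w‖ :=
            (u' (p t) - u' y).le_opNorm w
        _ = ‖u' (p t) - u' y‖ := by rw [hwnorm, mul_one]
        _ ≤ K₁ * ‖p t - y‖ ^ γ := hHol _ (hpΩ t ht) _ hy
        _ ≤ K₁ * h ^ γ := by
            apply mul_le_mul_of_nonneg_left _ hK₁
            apply Real.rpow_le_rpow (norm_nonneg _) _ hγ.1.le
            have : p t - y = t • w := by simp [hp]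
            rw [this, norm_smul, hwnorm, mul_one, Real.norm_eq_abs,
              abs_of_nonneg ht.1]
            exact ht.2
    have hmv := (convex_Icc (0:ℝ) h).norm_image_sub_le_of_norm_hasDerivWithin_le
      hderiv hbound (left_mem_Icc.2 hhpos.le) (right_mem_Icc.2 hhpos.le)
    have hφ0 : φ 0 = u y := by simp [hφ, hp]
    have hφh : φ h = u (p h) - h * c := rfl
    have hnorm : ‖φ h - φ 0‖ ≤ K₁ * h ^ γ * h := by
      simpa [abs_of_nonneg hhpos.le] using hmv
    have habs : |h * c| ≤ |u (p h)| + |u y| + K₁ * h ^ γ * h := by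
      have : h * c = -(φ h - φ 0) + (u (p h) - u y) := by
        rw [hφh, hφ0]; ring
      rw [this]
      calc |(-(φ h - φ 0) + (u (p h) - u y))| ≤ |(-(φ h - φ 0))| + |u (p h) - u y| :=
            abs_add_le _ _
        _ = |(φ h - φ 0)| + |u (p h) - u y| := by rw [abs_neg]
        _ ≤ K₁ * h ^ γ * h + (|u (p h)| + |u y|) := by
            gcongr
            · simpa [Real.norm_eq_abs] using hnorm
            · exact abs_sub _ _
        _ = |u (p h)| + |u y| + K₁ * h ^ γ * h := by ring
    have hc_eq : |c| = |u' y ν| := by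
      rw [hc, hw, map_smul, smul_eq_mul, abs_mul, hs1, one_mul]
    have hph : p h ∈ Ω := hpΩ h (right_mem_Icc.2 hhpos.le)
    have hfinal : |u' y ν| * h ≤ 2 * K₂ + K₁ * h ^ γ * h := by
      have e : |h * c| = |u' y ν| * h := by
        rw [abs_mul, hc_eq, abs_of_nonneg hhpos.le, mul_comm]
      rw [← e]
      calc |h * c| ≤ |u (p h)| + |u y| + K₁ * h ^ γ * h := habs
        _ ≤ K₂ + K₂ + K₁ * h ^ γ * h := by gcongr; exacts [hub _ hph, hub _ hy]
        _ = 2 * K₂ + K₁ * h ^ γ * h := by ring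
    have hpow : h ^ γ * h = h ^ (1 + γ) := by
      rw [Real.rpow_add hhpos, Real.rpow_one]; ring
    calc |u' y ν| * h ≤ 2 * K₂ + K₁ * h ^ γ * h := hfinal
      _ = 2 * K₂ + K₁ * h ^ (1 + γ) := by rw [mul_assoc, hpow]
  -- pass to operator norm
  have hop : ‖u' y‖ ≤ (2 * K₂ + K₁ * h ^ (1 + γ)) / h := by
    apply ContinuousLinearMap.opNorm_le_bound _ (div_nonneg hrhs hhpos.le)
    intro z
    rcases eq_or_ne z 0 with rfl | hz
    · simp
    · have hznorm : (0:ℝ) < ‖z‖ := norm_pos_iff.2 hz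
      set ν : En n := ‖z‖⁻¹ • z with hν
      have hν1 : ‖ν‖ = 1 := by
        rw [hν, norm_smul, norm_inv, norm_norm, inv_mul_cancel₀ hznorm.ne']
      have hzν : u' y z = ‖z‖ * u' y ν := by
        rw [hν, map_smul, smul_eq_mul, ← mul_assoc, mul_inv_cancel₀ hznorm.ne', one_mul]
      have := key ν hν1
      have hb : |u' y ν| ≤ (2 * K₂ + K₁ * h ^ (1 + γ)) / h :=
        (le_div_iff₀ hhpos).2 this
      rw [Real.norm_eq_abs, hzν, abs_mul, abs_of_nonneg hznorm.le, mul_comm]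
      exact mul_le_mul_of_nonneg_right hb hznorm.le
  exact (le_div_iff₀ hhpos).1 hop

/-- **Lemma 6.2 (interpolation inequality).**
If every point of the bounded open set `Ω` can be moved inside `Ω` along any direction
(up to a sign) for length `h₀`, then for every `C^{1,γ}` function `u` on `Ω`,
`sup |u| + sup |Du| ≤ C K₁^{1/(1+γ)} K₂^{γ/(1+γ)}`, where `K₁` bounds the full
`C^{1,γ}` data of `u` and `K₂` bounds `|u|`. -/
theorem stmt_18 (n : ℕ) (hn : 1 ≤ n) (γ h₀ : ℝ) (hγ : γ ∈ Ioc (0 : ℝ) 1) (hh₀ : 0 < h₀)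
    (Ω : Set (En n)) (hΩopen : IsOpen Ω) (hΩne : Ω.Nonempty)
    (hΩbdd : Bornology.IsBounded Ω)
    (hΩseg : ∀ x ∈ Ω, ∀ ν : En n, ‖ν‖ = 1 → ∃ s : ℝ, (s = 1 ∨ s = -1) ∧
      ∀ h : ℝ, h ∈ Ioo (0 : ℝ) h₀ → x + (h * s) • ν ∈ Ω) :
    ∃ C : ℝ, 0 < C ∧ ∀ (u : En n → ℝ) (u' : En n → En n →L[ℝ] ℝ),
      (∀ x ∈ Ω, HasFDerivWithinAt u (u' x) Ω x) →
      ∀ K₁ K₂ : ℝ,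
      (∀ x ∈ Ω, |u x| ≤ K₂) →
      (∀ x ∈ Ω, |u x| + ‖u' x‖ ≤ K₁) →
      (∀ x ∈ Ω, ∀ y ∈ Ω, ‖u' x - u' y‖ ≤ K₁ * ‖x - y‖ ^ γ) →
      ∀ x ∈ Ω, ∀ y ∈ Ω,
        |u x| + ‖u' y‖ ≤ C * K₁ ^ (1 / (1 + γ)) * K₂ ^ (γ / (1 + γ)) := by
  have hγpos : 0 < γ := hγ.1
  have h1γ : 0 < 1 + γ := by linarith
  refine ⟨2 + 4 / h₀ + (h₀ / 2) ^ γ, by positivity, ?_⟩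
  intro u u' hd K₁ K₂ hub hK1b hHol x hx y hy
  set C : ℝ := 2 + 4 / h₀ + (h₀ / 2) ^ γ with hC
  have hCpos : 0 < C := by rw [hC]; positivity
  have hK₂0 : 0 ≤ K₂ := (abs_nonneg _).trans (hub x hx)
  have hK₁0 : 0 ≤ K₁ := le_trans (by positivity) (hK1b x hx)
  rcases eq_or_lt_of_le hK₁0 with hK₁z | hK₁pos
  · -- K₁ = 0
    have h1 : |u x| ≤ 0 := by
      have := hK1b x hx; nlinarith [norm_nonneg (u' x)]
    have h2 : ‖u' y‖ ≤ 0 := by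
      have := hK1b y hy; nlinarith [abs_nonneg (u y)]
    have hz : (0:ℝ) ^ (1 / (1 + γ)) = 0 := Real.zero_rpow (by positivity)
    rw [← hK₁z, hz]
    simp only [mul_zero, zero_mul]
    linarith
  · -- K₁ > 0
    have hcore : ∀ h ∈ Ioo (0:ℝ) h₀, ‖u' y‖ * h ≤ 2 * K₂ + K₁ * h ^ (1 + γ) := by
      intro h hh
      refine core_est n γ h₀ hγ Ω hΩopen hΩseg u u' hd K₁ K₂ hK₁0 hK₂0 hub hHol y hy h hh
    rcases le_or_gt K₁ K₂ with hle | hlt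
    · -- K₂ ≥ K₁ : trivial bound
      have hsum : |u x| + ‖u' y‖ ≤ 2 * K₁ := by
        have h1 := hK1b x hx
        have h2 := hK1b y hy
        have := norm_nonneg (u' x)
        have := abs_nonneg (u y)
        linarith
      have hKrw : K₁ = K₁ ^ (1 / (1 + γ)) * K₁ ^ (γ / (1 + γ)) := by
        rw [← Real.rpow_add hK₁pos]
        rw [← add_div, div_self h1γ.ne', Real.rpow_one]
      have hmono : K₁ ^ (γ / (1 + γ)) ≤ K₂ ^ (γ / (1 + γ)) :=
        Real.rpow_le_rpow hK₁pos.le hle (by positivity)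
      have hK1p : 0 < K₁ ^ (1 / (1 + γ)) := Real.rpow_pos_of_pos hK₁pos _
      calc |u x| + ‖u' y‖ ≤ 2 * K₁ := hsum
        _ = 2 * (K₁ ^ (1 / (1 + γ)) * K₁ ^ (γ / (1 + γ))) := by rw [← hKrw]
        _ ≤ 2 * (K₁ ^ (1 / (1 + γ)) * K₂ ^ (γ / (1 + γ))) := by
            gcongr
        _ ≤ C * K₁ ^ (1 / (1 + γ)) * K₂ ^ (γ / (1 + γ)) := by
            have hK2p : 0 ≤ K₂ ^ (γ / (1 + γ)) := Real.rpow_nonneg hK₂0 _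
            have h2C : (2:ℝ) ≤ C := by
              rw [hC]
              have : 0 ≤ (h₀/2) ^ γ := Real.rpow_nonneg (by positivity) _
              have : 0 < 4 / h₀ := by positivity
              linarith
            rw [mul_assoc]
            exact mul_le_mul_of_nonneg_right h2C (by positivity)
    · -- K₂ < K₁
      rcases eq_or_lt_of_le hK₂0 with hK₂z | hK₂pos
      · -- K₂ = 0
        have hux0 : |u x| ≤ 0 := by rw [hK₂z]; exact hub x hx
        have huy0 : ‖u' y‖ ≤ 0 := by
          have hev : ∀ᶠ h in 𝓝[>] (0:ℝ), ‖u' y‖ ≤ K₁ * h ^ γ := by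
            filter_upwards [Ioo_mem_nhdsGT_of_mem ⟨le_refl (0:ℝ), hh₀⟩] with h hh
            have := hcore h hh
            rw [← hK₂z] at this
            have hpow : h ^ (1 + γ) = h ^ γ * h := by
              rw [Real.rpow_add hh.1, Real.rpow_one]; ring
            have h2 : ‖u' y‖ * h ≤ (K₁ * h ^ γ) * h := by
              calc ‖u' y‖ * h ≤ 2 * 0 + K₁ * h ^ (1 + γ) := this
                _ = (K₁ * h ^ γ) * h := by rw [hpow]; ring
            exact le_of_mul_le_mul_right h2 hh.1
          have htend : Tendsto (fun h : ℝ => K₁ * h ^ γ) (𝓝[>] (0:ℝ)) (𝓝 0) := by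
            have h1 : ContinuousAt (fun h : ℝ => h ^ γ) 0 :=
              Real.continuousAt_rpow_const 0 γ (Or.inr hγpos.le)
            have h2 : Tendsto (fun h : ℝ => h ^ γ) (𝓝[>] (0:ℝ)) (𝓝 ((0:ℝ) ^ γ)) :=
              (h1.tendsto).mono_left nhdsWithin_le_nhds
            rw [Real.zero_rpow hγpos.ne'] at h2
            simpa using h2.const_mul K₁
          exact ge_of_tendsto htend hev
        have hz : K₂ ^ (γ / (1 + γ)) = 0 := by
          rw [← hK₂z]; exact Real.zero_rpow (by positivity)
        rw [hz, mul_zero]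
        linarith
      · -- 0 < K₂ < K₁ : the interpolation choice of h
        set a : ℝ := K₁ ^ (1 / (1 + γ)) with ha
        set b : ℝ := K₂ ^ (γ / (1 + γ)) with hb
        have hapos : 0 < a := Real.rpow_pos_of_pos hK₁pos _
        have hbpos : 0 < b := Real.rpow_pos_of_pos hK₂pos _
        set r : ℝ := (K₂ / K₁) ^ (1 / (1 + γ)) with hrdef
        have hrpos : 0 < r := Real.rpow_pos_of_pos (div_pos hK₂pos hK₁pos) _
        have hr1 : r < 1 :=
          Real.rpow_lt_one (div_nonneg hK₂pos.le hK₁pos.le)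
            ((div_lt_one hK₁pos).2 hlt) (by positivity)
        set h : ℝ := h₀ / 2 * r with hhdef
        have hhpos : 0 < h := by positivity
        have hhlt : h < h₀ := by nlinarith
        have hra : r * a = K₂ ^ (1 / (1 + γ)) := by
          rw [hrdef, ha, ← Real.mul_rpow (by positivity) hK₁pos.le,
            div_mul_cancel₀ _ hK₁pos.ne']
        have hexp : 1 / (1 + γ) + γ / (1 + γ) = 1 := by
          rw [← add_div]; exact div_self h1γ.ne'
        have hK₂eq : K₂ = r * (a * b) := by
          rw [← mul_assoc, hra, hb, ← Real.rpow_add hK₂pos, hexp, Real.rpow_one]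
        have hrγ : K₁ * r ^ γ = a * b := by
          have h1 : r ^ γ = (K₂ / K₁) ^ (γ / (1 + γ)) := by
            rw [hrdef, ← Real.rpow_mul (div_nonneg hK₂pos.le hK₁pos.le)]
            ring_nf
          have h2 : (K₂ / K₁) ^ (γ / (1 + γ)) = b / K₁ ^ (γ / (1 + γ)) := by
            rw [Real.div_rpow hK₂pos.le hK₁pos.le, hb]
          have h3 : K₁ / K₁ ^ (γ / (1 + γ)) = a := by
            have he : (1:ℝ) - γ / (1 + γ) = 1 / (1 + γ) := by field_simp; ring
            rw [ha, ← he, Real.rpow_sub hK₁pos, Real.rpow_one]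
          rw [h1, h2, ← h3]; field_simp
        have hKh : K₁ * h ^ γ = (h₀/2) ^ γ * (a * b) := by
          rw [hhdef, Real.mul_rpow (by positivity) hrpos.le, ← hrγ]; ring
        have hK₂h : 2 * K₂ / h = 4 / h₀ * (a * b) := by
          rw [hK₂eq, hhdef]
          field_simp
          ring
        have hsplit : ‖u' y‖ ≤ 2 * K₂ / h + K₁ * h ^ γ := by
          have hpow : h ^ (1 + γ) = h ^ γ * h := by
            rw [Real.rpow_add hhpos, Real.rpow_one]; ring
          have hmul : ‖u' y‖ * h ≤ (2 * K₂ / h + K₁ * h ^ γ) * h := by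
            rw [add_mul, div_mul_cancel₀ _ hhpos.ne']
            calc ‖u' y‖ * h ≤ 2 * K₂ + K₁ * h ^ (1 + γ) := hcore h ⟨hhpos, hhlt⟩
              _ = 2 * K₂ + K₁ * h ^ γ * h := by rw [hpow]; ring
          exact le_of_mul_le_mul_right hmul hhpos
        have hux : |u x| ≤ a * b := by
          calc |u x| ≤ K₂ := hub x hx
            _ = K₂ ^ (1 / (1 + γ)) * b := by
                rw [hb, ← Real.rpow_add hK₂pos, hexp, Real.rpow_one]
            _ ≤ a * b := by
                gcongr
                exact Real.rpow_le_rpow hK₂pos.le hlt.le (by positivity)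
        have hfin : ‖u' y‖ ≤ (4 / h₀ + (h₀/2) ^ γ) * (a * b) := by
          rw [add_mul, ← hK₂h, ← hKh]; exact hsplit
        have habpos : 0 < a * b := mul_pos hapos hbpos
        have hh₀γ : 0 ≤ (h₀/2) ^ γ := Real.rpow_nonneg (by positivity) _
        calc |u x| + ‖u' y‖ ≤ a * b + (4 / h₀ + (h₀/2) ^ γ) * (a * b) :=
              add_le_add hux hfin
          _ ≤ C * a * b := by rw [hC]; nlinarith
end
end
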